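/- arXiv:1808.04321 — 5 statements merged into one kernel-verified Lean document; each statement's English description precedes it below -/
import Mathlib

section
/- For every m ≥ 1 there exists b > 0 such that the functions y ↦ η(y) := (y + √(1+y²))/2 and y ↦ ξ(η(y)) := i(1 − (1 + i·b·η(y)^m)^a) (using the principal branch of the power) admit analytic continuation to the horizontal strip S = {y ∈ ℂ : |Im y| < 1}; i.e., for all y in the strip, 1 + i·b·((y+√(1+y²))/2)^m does not lie in the negative real half-line (−∞, 0]. -/
open Complex Set

/-- η(y) = (y + √(1+y²))/2, principal branch. -/
noncomputable def eta0 (y : ℂ) : ℂ := (y + (1 + y ^ 2) ^ ((1 : ℂ) / 2)) / 2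

lemma re_cpow_half_nonneg (z : ℂ) : 0 ≤ (z ^ ((1:ℂ)/2)).re := by
  rcases eq_or_ne z 0 with rfl | hz
  · rw [Complex.zero_cpow (by norm_num)]; simp
  · rw [Complex.cpow_def_of_ne_zero hz, Complex.exp_re]
    apply mul_nonneg (Real.exp_pos _).le
    apply Real.cos_nonneg_of_mem_Icc
    have h1 := Complex.neg_pi_lt_arg z
    have h2 := Complex.arg_le_pi z
    have : (Complex.log z * ((1:ℂ)/2)).im = z.arg / 2 := by
      simp [Complex.mul_im, Complex.log_im, Complex.log_re]; ring
    rw [this]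
    constructor <;> [linarith; linarith]

lemma sq_sqrt' (z : ℂ) : (z ^ ((1:ℂ)/2)) ^ 2 = z := by
  have := Complex.cpow_nat_inv_pow z (n := 2) (by norm_num)
  simp only [one_div]
  exact_mod_cast this

lemma eta0_re_pos {y : ℂ} (hy : |y.im| < 1) : 0 < (eta0 y).re := by
  have hp : 0 ≤ ((1 + y ^ 2) ^ ((1:ℂ)/2)).re := re_cpow_half_nonneg _
  set s := (1 + y ^ 2) ^ ((1:ℂ)/2) with hs
  have hsq : s ^ 2 = 1 + y ^ 2 := sq_sqrt' _
  have hre : s.re * s.re - s.im * s.im = 1 + (y.re * y.re - y.im * y.im) := by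
    have := congrArg Complex.re hsq
    simpa [pow_two, Complex.mul_re, Complex.add_re, Complex.one_re] using this
  have ht : y.im ^ 2 < 1 := by
    have := abs_lt.mp hy; nlinarith [this.1, this.2]
  have hgt : y.re ^ 2 < s.re ^ 2 := by nlinarith [sq_nonneg s.im]
  have h0 : 0 < s.re := by
    rcases lt_or_eq_of_le hp with h | h
    · exact h
    · exfalso; nlinarith [sq_nonneg y.re]
  have hlt : -y.re < s.re := by nlinarith [neg_abs_le y.re, abs_nonneg y.re, _root_.sq_abs y.re]
  have h2 : 0 < (y + s).re := by simp only [Complex.add_re]; linarith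
  have : (eta0 y).re = (y + s).re / 2 := by
    simp [eta0, ← hs, Complex.div_re, Complex.normSq]
    ring_nf
    rw [hs]
  rw [this]; linarith

lemma eta0_ne_zero {y : ℂ} (hy : |y.im| < 1) : eta0 y ≠ 0 :=
  fun h => by have := eta0_re_pos hy; rw [h] at this; simp at this

lemma eta0_mem_slitPlane {y : ℂ} (hy : |y.im| < 1) : eta0 y ∈ Complex.slitPlane :=
  Or.inl (eta0_re_pos hy)

lemma eta0_im_le {y : ℂ} (hy : |y.im| < 1) : |(eta0 y).im| ≤ |y.im| := by
  set η := eta0 y with hη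
  have hne : η ≠ 0 := eta0_ne_zero hy
  have hid : 4 * η ^ 2 - 4 * η * y = 1 := by
    have hs : (1 + y^2) ^ ((1:ℂ)/2) = 2 * η - y := by rw [hη]; unfold eta0; ring
    have := sq_sqrt' (1 + y^2)
    rw [hs] at this; linear_combination this
  have hyeq : y = η - (4*η)⁻¹ := by
    field_simp
    linear_combination -hid
  have him : y.im = η.im * (1 + 1/(4 * Complex.normSq η)) := by
    have h4 : Complex.normSq (4*η) = 16 * Complex.normSq η := by
      simp [Complex.normSq_mul]; norm_num
    have hnsq : 0 < Complex.normSq η := Complex.normSq_pos.mpr hne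
    rw [hyeq]
    simp only [Complex.sub_im, Complex.inv_im, h4]
    have : (4*η).im = 4 * η.im := by simp
    rw [this]
    field_simp
    ring
  rw [him, abs_mul]
  have hnsq : 0 < Complex.normSq η := Complex.normSq_pos.mpr hne
  have h1 : 1 ≤ |1 + 1/(4 * Complex.normSq η)| := by
    rw [_root_.abs_of_pos (by positivity)]
    have : 0 < 1/(4 * Complex.normSq η) := by positivity
    linarith
  nlinarith [abs_nonneg η.im]

open Real in
lemma key {y : ℂ} (hy : |y.im| < 1) {m : ℝ} (hm : 1 ≤ m)
    (hre : ((eta0 y) ^ (m:ℂ)).re = 0)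
    (him : 1 ≤ (Real.sin (π/(2*m)) ^ m / 2) * |((eta0 y) ^ (m:ℂ)).im|) : False := by
  have hm0 : (0:ℝ) < m := by linarith
  have hπ : (0:ℝ) < π := Real.pi_pos
  have hhalf : π/(2*m) ≤ π/2 := by
    apply div_le_div_of_nonneg_left hπ.le two_pos; linarith
  have hs0 : 0 < Real.sin (π/(2*m)) := by
    apply Real.sin_pos_of_pos_of_lt_pi (by positivity); linarith
  set η := eta0 y with hηdef
  have hηre : 0 < η.re := eta0_re_pos hy
  have hne : η ≠ 0 := eta0_ne_zero hy
  have hr : 0 < ‖η‖ := norm_pos_iff.mpr hne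
  set r := ‖η‖ with hrdef
  set θ := Complex.arg η with hθdef
  have hθlt : |θ| < π/2 := Complex.abs_arg_lt_pi_div_two_iff.mpr (Or.inl hηre)
  have hz : (η : ℂ) ^ (m:ℂ) = Complex.exp (Complex.log η * m) :=
    Complex.cpow_def_of_ne_zero hne _
  have hzre : ((η:ℂ) ^ (m:ℂ)).re = Real.exp (Real.log r * m) * Real.cos (θ * m) := by
    rw [hz, Complex.exp_re]
    congr 1
    · congr 1; simp [Complex.mul_re, Complex.log_re, Complex.log_im]; exact Or.inl rfl
    · congr 1; simp [Complex.mul_im, Complex.log_re, Complex.log_im]; exact Or.inl rfl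
  have hcos : Real.cos (θ * m) = 0 := by
    rw [hzre] at hre
    rcases mul_eq_zero.mp hre with h | h
    · exact absurd h (Real.exp_ne_zero _)
    · exact h
  obtain ⟨k, hk⟩ := Real.cos_eq_zero_iff.mp hcos
  have hk1 : (1:ℝ) ≤ |2*(k:ℝ)+1| := by
    have h1 : (1:ℤ) ≤ |2*k+1| := Int.one_le_abs (by omega)
    calc (1:ℝ) = ((1:ℤ):ℝ) := by norm_num
      _ ≤ ((|2*k+1|:ℤ):ℝ) := by exact_mod_cast h1
      _ = |2*(k:ℝ)+1| := by push_cast [Int.cast_abs]; norm_num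
  have habs : π/2 ≤ |θ| * m := by
    have : |θ * m| = |2*(k:ℝ)+1| * (π/2) := by
      rw [hk, show ((2*(k:ℝ)+1) * π / 2) = (2*(k:ℝ)+1) * (π/2) by ring, abs_mul,
        _root_.abs_of_pos (by positivity : (0:ℝ) < π/2)]
    have h2 : π/2 ≤ |θ * m| := by rw [this]; nlinarith
    rwa [abs_mul, _root_.abs_of_pos hm0] at h2
  have hθge : π/(2*m) ≤ |θ| := by
    rw [div_le_iff₀ (by positivity)]
    calc π = (π/2) * 2 := by ring
      _ ≤ (|θ| * m) * 2 := by linarith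
      _ = |θ| * (2*m) := by ring
  have hsin : Real.sin (π/(2*m)) ≤ |Real.sin θ| := by
    have h1 : Real.sin (π/(2*m)) ≤ Real.sin |θ| := by
      have hpos : 0 < π/(2*m) := by positivity
      apply Real.strictMonoOn_sin.monotoneOn _ _ hθge
      · constructor <;> linarith
      · constructor <;> linarith [abs_nonneg θ]
    have h2 : Real.sin |θ| = |Real.sin θ| := by
      rcases le_or_gt 0 θ with h | h
      · rw [_root_.abs_of_nonneg h, _root_.abs_of_nonneg
          (Real.sin_nonneg_of_nonneg_of_le_pi h (by have := _root_.abs_of_nonneg h; linarith))]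
      · rw [_root_.abs_of_neg h, Real.sin_neg, _root_.abs_of_neg]
        apply Real.sin_neg_of_neg_of_neg_pi_lt h
        have := _root_.abs_of_neg h; linarith [hθlt]
    linarith [h2 ▸ h1]
  have himη : η.im = r * Real.sin θ := by
    have := Complex.sin_arg η
    rw [← hθdef, ← hrdef] at this
    field_simp at this
    linarith [this]
  have hrb : r < 1 / Real.sin (π/(2*m)) := by
    have h1 : r * Real.sin (π/(2*m)) ≤ |η.im| := by
      rw [himη, abs_mul, _root_.abs_of_pos hr]
      nlinarith
    have h2 : |η.im| < 1 := lt_of_le_of_lt (eta0_im_le hy) hy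
    rw [lt_div_iff₀ hs0]; linarith
  have hzabs : ‖(η:ℂ) ^ (m:ℂ)‖ = r ^ m := by
    rw [hz, Complex.norm_exp]
    rw [Real.rpow_def_of_pos hr]
    congr 1
    simp [Complex.mul_re, Complex.log_re, Complex.log_im]; exact Or.inl rfl
  have hfin : (Real.sin (π/(2*m)) ^ m / 2) * |((η:ℂ) ^ (m:ℂ)).im| < 1 := by
    have h1 : |((η:ℂ) ^ (m:ℂ)).im| ≤ r ^ m := hzabs ▸ Complex.abs_im_le_norm _
    have h2 : r ^ m < (1 / Real.sin (π/(2*m))) ^ m :=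
      Real.rpow_lt_rpow hr.le hrb hm0
    have h3 : (1 / Real.sin (π/(2*m))) ^ m = (Real.sin (π/(2*m)) ^ m)⁻¹ := by
      rw [one_div, ← Real.inv_rpow hs0.le]
    have h4 : 0 < Real.sin (π/(2*m)) ^ m := Real.rpow_pos_of_pos hs0 m
    calc (Real.sin (π/(2*m)) ^ m / 2) * |((η:ℂ) ^ (m:ℂ)).im|
        ≤ (Real.sin (π/(2*m)) ^ m / 2) * (r ^ m) := by
          apply mul_le_mul_of_nonneg_left h1 (by positivity)
      _ < (Real.sin (π/(2*m)) ^ m / 2) * ((Real.sin (π/(2*m)) ^ m)⁻¹) := by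
          rw [← h3]; apply mul_lt_mul_of_pos_left h2 (by positivity)
      _ = 1/2 := by field_simp
      _ < 1 := by norm_num
  linarith

lemma mem_slit_of_not_exists {w : ℂ} (h : ¬ ∃ t : ℝ, t ≤ 0 ∧ w = (t:ℂ)) :
    w ∈ Complex.slitPlane := by
  by_contra hw
  simp only [Complex.mem_slitPlane_iff] at hw
  push_neg at hw
  exact h ⟨w.re, hw.1, by
    apply Complex.ext <;> simp [hw.2]⟩

lemma one_add_sq_mem_slit {y : ℂ} (hy : |y.im| < 1) : 1 + y^2 ∈ Complex.slitPlane := by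
  rw [Complex.mem_slitPlane_iff]
  have hre : (1 + y^2).re = 1 + (y.re*y.re - y.im*y.im) := by
    simp [pow_two, Complex.mul_re]
  have him : (1 + y^2).im = y.re*y.im + y.im*y.re := by
    simp [pow_two, Complex.mul_im]
  rcases eq_or_ne y.re 0 with h | h
  · left
    rw [hre, h]
    have := abs_lt.mp hy
    nlinarith [this.1, this.2]
  · rcases eq_or_ne y.im 0 with h2 | h2
    · left; rw [hre, h2]; nlinarith
    · right; rw [him]; intro hc; rcases mul_eq_zero.mp (by linarith [hc] : y.re * y.im = 0) with h3 | h3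
      · exact h h3
      · exact h2 h3

lemma isOpen_strip : IsOpen {y : ℂ | |y.im| < 1} :=
  isOpen_lt (continuous_abs.comp Complex.continuous_im) continuous_const

lemma eta0_diffAt {y : ℂ} (hy : |y.im| < 1) : DifferentiableAt ℂ eta0 y := by
  unfold eta0
  apply DifferentiableAt.div_const
  apply DifferentiableAt.add differentiableAt_id
  exact DifferentiableAt.cpow (by fun_prop) (differentiableAt_const _) (one_add_sq_mem_slit hy)

/-- For every m ≥ 1 there exists b > 0 such that η and y ↦ i(1 − (1 + i b η(y)^m)^a)
admit analytic continuation to the strip {|Im y| < 1}; in particular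
1 ± i b η(y)^m never lies in (−∞, 0]. -/
theorem stmt_0 (a : ℝ) (m : ℝ) (hm : 1 ≤ m) :
    ∃ b : ℝ, 0 < b ∧
      AnalyticOn ℂ eta0 {y : ℂ | |y.im| < 1} ∧
      AnalyticOn ℂ
        (fun y : ℂ => Complex.I * (1 - (1 + Complex.I * b * (eta0 y) ^ (m : ℂ)) ^ (a : ℂ)))
        {y : ℂ | |y.im| < 1} ∧
      (∀ y : ℂ, |y.im| < 1 →
        (¬ ∃ t : ℝ, t ≤ 0 ∧ 1 + Complex.I * b * (eta0 y) ^ (m : ℂ) = (t : ℂ)) ∧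
        (¬ ∃ t : ℝ, t ≤ 0 ∧ 1 - Complex.I * b * (eta0 y) ^ (m : ℂ) = (t : ℂ))) := by
  classical
  set b : ℝ := Real.sin (Real.pi/(2*m)) ^ m / 2 with hbdef
  have hm0 : (0:ℝ) < m := by linarith
  have hπ : (0:ℝ) < Real.pi := Real.pi_pos
  have hs0 : 0 < Real.sin (Real.pi/(2*m)) := by
    apply Real.sin_pos_of_pos_of_lt_pi (by positivity)
    have : Real.pi/(2*m) ≤ Real.pi/2 := by
      apply div_le_div_of_nonneg_left hπ.le two_pos; linarith
    linarith
  have hb : 0 < b := by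
    rw [hbdef]
    have := Real.rpow_pos_of_pos hs0 m
    positivity
  -- the avoidance statement
  have hkey : ∀ y : ℂ, |y.im| < 1 →
      (¬ ∃ t : ℝ, t ≤ 0 ∧ 1 + Complex.I * b * (eta0 y) ^ (m : ℂ) = (t : ℂ)) ∧
      (¬ ∃ t : ℝ, t ≤ 0 ∧ 1 - Complex.I * b * (eta0 y) ^ (m : ℂ) = (t : ℂ)) := by
    intro y hy
    set z := (eta0 y) ^ (m:ℂ) with hzdef
    constructor
    · rintro ⟨t, ht, heq⟩
      have h1 : 1 + (-(b * z.im)) = t := by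
        have := congrArg Complex.re heq
        simpa [Complex.add_re, Complex.mul_re, Complex.mul_im] using this
      have h2 : b * z.re = 0 := by
        have := congrArg Complex.im heq
        simpa [Complex.add_im, Complex.mul_re, Complex.mul_im] using this
      have hre : z.re = 0 := by
        rcases mul_eq_zero.mp h2 with h | h
        · exact absurd h hb.ne'
        · exact h
      have him : 1 ≤ b * |z.im| := by
        have hzim : b * z.im = 1 - t := by linarith
        have : 0 ≤ z.im := by nlinarith
        rw [_root_.abs_of_nonneg this, hzim]; linarith
      exact key hy hm hre (by rw [hbdef] at him; exact him)
    · rintro ⟨t, ht, heq⟩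
      have h1 : 1 - (-(b * z.im)) = t := by
        have := congrArg Complex.re heq
        simpa [Complex.sub_re, Complex.mul_re, Complex.mul_im] using this
      have h2 : b * z.re = 0 := by
        have := congrArg Complex.im heq
        simpa [Complex.sub_im, Complex.mul_re, Complex.mul_im] using this
      have hre : z.re = 0 := by
        rcases mul_eq_zero.mp h2 with h | h
        · exact absurd h hb.ne'
        · exact h
      have him : 1 ≤ b * |z.im| := by
        have hzim : b * z.im = t - 1 := by linarith
        have : z.im ≤ 0 := by nlinarith
        rw [_root_.abs_of_nonpos this]; nlinarith
      exact key hy hm hre (by rw [hbdef] at him; exact him)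
  refine ⟨b, hb, ?_, ?_, hkey⟩
  · apply DifferentiableOn.analyticOn _ isOpen_strip
    intro y hy
    simp only [mem_setOf_eq] at hy
    exact (eta0_diffAt hy).differentiableWithinAt
  · apply DifferentiableOn.analyticOn _ isOpen_strip
    intro y hy
    simp only [mem_setOf_eq] at hy
    apply DifferentiableAt.differentiableWithinAt
    have h1 : DifferentiableAt ℂ (fun y : ℂ => (eta0 y) ^ (m:ℂ)) y :=
      DifferentiableAt.cpow (eta0_diffAt hy) (differentiableAt_const _)
        (eta0_mem_slitPlane hy)
    have h2 : DifferentiableAt ℂ (fun y : ℂ => 1 + Complex.I * b * (eta0 y) ^ (m:ℂ)) y :=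
      (h1.const_mul _).const_add _
    have h3 : DifferentiableAt ℂ
        (fun y : ℂ => (1 + Complex.I * b * (eta0 y) ^ (m:ℂ)) ^ (a:ℂ)) y :=
      DifferentiableAt.cpow h2 (differentiableAt_const _)
        (mem_slit_of_not_exists (hkey y hy).1)
    exact (h3.const_sub _).const_mul _
end

section
/- For α ∈ (0,2), α ≠ 1, and C₊ ∈ ℂ with Re C₊ > 0, the principal-value integral J₋₁(α,C₊) := (1/(2π)) ∫_{ℝ} (e^{−ψ(ξ)} − e^{−|ξ|}) / (−iξ) dξ, where ψ(ξ) = C₊|ξ|^α for ξ>0 and ψ(ξ) = \overline{C₊}|ξ|^α for ξ<0, equals φ₀/(απ), where φ₀ = arg C₊ ∈ (−π/2, π/2). Equivalently J₋₁(α,C₊) = (1/(2πiα)) log(C₊/\overline{C₊}). -/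
open Complex Set

/-- The symmetrized stable characteristic exponent: ψ(ξ) = C₊|ξ|^α for ξ > 0 and
ψ(ξ) = conj C₊ |ξ|^α for ξ < 0. -/
noncomputable def psiStable (α : ℝ) (C : ℂ) (ξ : ℝ) : ℂ :=
  (if 0 ≤ ξ then C else (starRingEnd ℂ) C) * ((|ξ| : ℝ) : ℂ) ^ (α : ℂ)

section Aux

open MeasureTheory Real Set Filter Complex Metric

-- A1: cosine integral
lemma lemA1 {a : ℝ} (ha : 0 < a) (c : ℝ) :
    ∫ u in Ioi (0:ℝ), Real.exp (-(a*u)) * Real.cos (c*u) = a / (a^2 + c^2) := by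
  have hden : (0:ℝ) < a^2 + c^2 := by positivity
  set F : ℝ → ℝ := fun u => Real.exp (-(a*u)) * (-a * Real.cos (c*u) + c * Real.sin (c*u)) / (a^2+c^2) with hF
  have hderiv : ∀ x ∈ Ioi (0:ℝ), HasDerivAt F (Real.exp (-(a*x)) * Real.cos (c*x)) x := by
    intro x _
    have h1 : HasDerivAt (fun u : ℝ => Real.exp (-(a*u))) (Real.exp (-(a*x)) * (-a)) x := by
      have : HasDerivAt (fun u : ℝ => -(a*u)) (-a) x := by
        simpa [Pi.neg_def] using ((hasDerivAt_id x).const_mul a).neg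
      exact (Real.hasDerivAt_exp _).comp x this
    have hc : HasDerivAt (fun u : ℝ => Real.cos (c*u)) (-Real.sin (c*x) * c) x := by
      have : HasDerivAt (fun u : ℝ => c*u) c x := by simpa using (hasDerivAt_id x).const_mul c
      exact (Real.hasDerivAt_cos _).comp x this
    have hs : HasDerivAt (fun u : ℝ => Real.sin (c*u)) (Real.cos (c*x) * c) x := by
      have : HasDerivAt (fun u : ℝ => c*u) c x := by simpa using (hasDerivAt_id x).const_mul c
      exact (Real.hasDerivAt_sin _).comp x this
    have h2 : HasDerivAt (fun u : ℝ => -a * Real.cos (c*u) + c * Real.sin (c*u))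
        (-a * (-Real.sin (c*x) * c) + c * (Real.cos (c*x) * c)) x :=
      (hc.const_mul (-a)).add (hs.const_mul c)
    have h3 := (h1.mul h2).div_const (a^2+c^2)
    refine h3.congr_deriv ?_
    field_simp
    ring
  have hint : IntegrableOn (fun u => Real.exp (-(a*u)) * Real.cos (c*u)) (Ioi (0:ℝ)) := by
    refine Integrable.mono' (exp_neg_integrableOn_Ioi 0 ha) ?_ ?_
    · exact ((Real.continuous_exp.comp ((continuous_const.mul continuous_id).neg)).mul
        (Real.continuous_cos.comp (continuous_const.mul continuous_id))).aestronglyMeasurable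
    · filter_upwards with u
      rw [norm_mul, Real.norm_eq_abs, Real.norm_eq_abs, Real.abs_exp]
      calc Real.exp (-(a*u)) * |Real.cos (c*u)| ≤ Real.exp (-(a*u)) * 1 :=
        mul_le_mul_of_nonneg_left (Real.abs_cos_le_one _) (Real.exp_pos _).le
      _ = Real.exp (-(a*u)) := mul_one _
      _ = Real.exp (-a*u) := by rw [neg_mul]
  have htend : Tendsto F atTop (nhds 0) := by
    have h0 : Tendsto (fun u : ℝ => Real.exp (-(a*u))) atTop (nhds 0) := by
      have : Tendsto (fun u : ℝ => -(a*u)) atTop atBot := by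
        exact (tendsto_neg_atTop_atBot).comp (tendsto_id.const_mul_atTop ha)
      exact Real.tendsto_exp_atBot.comp this
    have hb : ∀ u : ℝ, ‖F u‖ ≤ Real.exp (-(a*u)) * ((a + |c|)/(a^2+c^2)) := by
      intro u
      rw [hF]
      have h1 : |(-a * Real.cos (c*u) + c * Real.sin (c*u))| ≤ a + |c| := by
        calc |(-a * Real.cos (c*u) + c * Real.sin (c*u))|
            ≤ |(-a * Real.cos (c*u))| + |c * Real.sin (c*u)| := abs_add_le _ _
          _ ≤ a * 1 + |c| * 1 := by
              rw [abs_mul, abs_mul, abs_neg, abs_of_pos ha]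
              gcongr
              · exact Real.abs_cos_le_one _
              · exact Real.abs_sin_le_one _
          _ = a + |c| := by ring
      rw [Real.norm_eq_abs, abs_div, abs_mul, Real.abs_exp, abs_of_pos hden, mul_div_assoc]
      gcongr
    have h2 : Tendsto (fun u : ℝ => Real.exp (-(a*u)) * ((a + |c|)/(a^2+c^2))) atTop (nhds 0) := by
      simpa using h0.mul_const ((a + |c|)/(a^2+c^2))
    exact squeeze_zero_norm hb h2
  have hFc : Continuous F := by
    apply Continuous.div_const
    have c1 : Continuous fun u : ℝ => Real.exp (-(a*u)) :=
      Real.continuous_exp.comp ((continuous_const.mul continuous_id).neg)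
    have c2 : Continuous fun u : ℝ => -a * Real.cos (c*u) + c * Real.sin (c*u) :=
      ((continuous_const.mul (Real.continuous_cos.comp (continuous_const.mul continuous_id)))).add
        (continuous_const.mul (Real.continuous_sin.comp (continuous_const.mul continuous_id)))
    exact c1.mul c2
  have := integral_Ioi_of_hasDerivAt_of_tendsto (a := 0)
    hFc.continuousWithinAt hderiv hint htend
  rw [this, hF]
  simp
  field_simp


lemma lemA {a : ℝ} (ha : 0 < a) (b : ℝ) :
    ∫ u in Ioi (0:ℝ), Real.exp (-(a*u)) * Real.sin (b*u) / u = Real.arctan (b/a) := by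
  set G : ℝ → ℝ := fun x => ∫ u in Ioi (0:ℝ), Real.exp (-(a*u)) * Real.sin (x*u) / u with hG
  have hmeas : ∀ x : ℝ, AEStronglyMeasurable (fun u => Real.exp (-(a*u)) * Real.sin (x*u) / u)
      (volume.restrict (Ioi (0:ℝ))) := by
    intro x
    apply ContinuousOn.aestronglyMeasurable _ measurableSet_Ioi
    apply ContinuousOn.div
    · exact ((Real.continuous_exp.comp ((continuous_const.mul continuous_id).neg)).mul
        (Real.continuous_sin.comp (continuous_const.mul continuous_id))).continuousOn
    · exact continuous_id.continuousOn
    · intro u hu; exact ne_of_gt hu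
  have hintx : ∀ x : ℝ, Integrable (fun u => Real.exp (-(a*u)) * Real.sin (x*u) / u)
      (volume.restrict (Ioi (0:ℝ))) := by
    intro x
    refine Integrable.mono' (((exp_neg_integrableOn_Ioi 0 ha)).const_mul |x|) (hmeas x) ?_
    filter_upwards [ae_restrict_mem measurableSet_Ioi] with u hu
    rw [norm_div, norm_mul, Real.norm_eq_abs, Real.norm_eq_abs, Real.norm_eq_abs, Real.abs_exp,
      abs_of_pos (show (0:ℝ) < u from hu)]
    rw [div_le_iff₀ (show (0:ℝ) < u from hu)]
    calc Real.exp (-(a*u)) * |Real.sin (x*u)| ≤ Real.exp (-(a*u)) * |x*u| :=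
          mul_le_mul_of_nonneg_left (Real.abs_sin_le_abs) (Real.exp_pos _).le
      _ = |x| * Real.exp (-a*u) * u := by rw [abs_mul, abs_of_pos (show (0:ℝ) < u from hu), neg_mul]; ring
  have hderivG : ∀ x : ℝ, HasDerivAt G (a / (a^2 + x^2)) x := by
    intro x
    have key := hasDerivAt_integral_of_dominated_loc_of_deriv_le
      (F := fun x u => Real.exp (-(a*u)) * Real.sin (x*u) / u)
      (F' := fun x u => Real.exp (-(a*u)) * Real.cos (x*u))
      (bound := fun u => Real.exp (-(a*u)))
      (μ := volume.restrict (Ioi (0:ℝ))) (x₀ := x) (s := Metric.ball x 1) (Metric.ball_mem_nhds x one_pos)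
      (Eventually.of_forall hmeas) (hintx x)
      (((Real.continuous_exp.comp ((continuous_const.mul continuous_id).neg)).mul
        (Real.continuous_cos.comp (continuous_const.mul continuous_id))).aestronglyMeasurable)
      ?_ ?_ ?_
    · rw [hG]
      have := key.2
      rwa [lemA1 ha x] at this
    · filter_upwards with u
      intro y _
      rw [norm_mul, Real.norm_eq_abs, Real.norm_eq_abs, Real.abs_exp]
      calc Real.exp (-(a*u)) * |Real.cos (y*u)| ≤ Real.exp (-(a*u)) * 1 :=
            mul_le_mul_of_nonneg_left (Real.abs_cos_le_one _) (Real.exp_pos _).le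
        _ = Real.exp (-(a*u)) := mul_one _
    · have : (fun u : ℝ => Real.exp (-(a*u))) = fun u => Real.exp (-a*u) := by
        funext u; rw [neg_mul]
      rw [this]
      exact exp_neg_integrableOn_Ioi 0 ha
    · filter_upwards [ae_restrict_mem measurableSet_Ioi] with u hu
      intro y _
      have hu0 : (u:ℝ) ≠ 0 := ne_of_gt hu
      have h1 : HasDerivAt (fun y : ℝ => Real.sin (y*u)) (Real.cos (y*u) * u) y := by
        have : HasDerivAt (fun y : ℝ => y*u) u y := hasDerivAt_mul_const u
        exact (Real.hasDerivAt_sin _).comp y this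
      have h2 := (h1.div_const u).const_mul (Real.exp (-(a*u)))
      have h3 : (fun x : ℝ => Real.exp (-(a*u)) * Real.sin (x*u) / u)
          = fun y => Real.exp (-(a*u)) * (Real.sin (y*u) / u) := by
        funext z; ring
      rw [h3]
      refine h2.congr_deriv ?_
      rw [mul_div_assoc, div_self hu0, mul_one]
  -- G is arctan (x/a) + const, with G 0 = 0
  have harct : ∀ x : ℝ, HasDerivAt (fun y : ℝ => Real.arctan (y/a)) (a / (a^2 + x^2)) x := by
    intro x
    have h1 : HasDerivAt (fun y : ℝ => y/a) (1/a) x := by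
      simpa using (hasDerivAt_id x).div_const a
    have h2 := (Real.hasDerivAt_arctan (x/a)).comp x h1
    refine h2.congr_deriv ?_
    have ha' : a ≠ 0 := ne_of_gt ha
    field_simp
  have hconst : ∀ x : ℝ, G x - Real.arctan (x/a) = G 0 - Real.arctan (0/a) := by
    intro x
    have hd : ∀ y : ℝ, HasDerivAt (fun z => G z - Real.arctan (z/a)) 0 y := by
      intro y
      have := (hderivG y).sub (harct y)
      simpa [Pi.sub_def] using this
    exact is_const_of_deriv_eq_zero (fun y => (hd y).differentiableAt)
      (fun y => (hd y).deriv) x 0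
  have hG0 : G 0 = 0 := by
    rw [hG]
    simp
  have := hconst b
  rw [hG0] at this
  simp at this
  rw [hG] at this
  linarith


lemma exp_sub_exp_norm_le {z w : ℂ} (hz : 0 ≤ z.re) (hw : 0 ≤ w.re) :
    ‖Complex.exp (-z) - Complex.exp (-w)‖ ≤ ‖z - w‖ := by
  have hs : Convex ℝ {c : ℂ | 0 ≤ c.re} := convex_halfSpace_re_ge 0
  have hd : ∀ x ∈ {c : ℂ | 0 ≤ c.re}, HasDerivWithinAt (fun c => Complex.exp (-c))
      (-Complex.exp (-x)) {c : ℂ | 0 ≤ c.re} x := by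
    intro x _
    have h1 : HasDerivAt (fun c : ℂ => -c) (-1) x := by simpa [Pi.neg_def] using (hasDerivAt_id x).neg
    have := (Complex.hasDerivAt_exp (-x)).comp x h1
    simpa [mul_comm, Function.comp_def] using this.hasDerivWithinAt
  have hb : ∀ x ∈ {c : ℂ | 0 ≤ c.re}, ‖-Complex.exp (-x)‖ ≤ 1 := by
    intro x hx
    rw [norm_neg, Complex.norm_exp]
    simp only [neg_re]
    exact Real.exp_le_one_iff.mpr (by simpa using hx)
  have := hs.norm_image_sub_le_of_norm_hasDerivWithin_le hd hb hw hz
  simpa using this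

lemma model_integrable {α : ℝ} (hα0 : 0 < α) (hα2 : α < 2) {D : ℂ} (hD : 0 < D.re) :
    IntegrableOn (fun x : ℝ =>
      (Complex.exp (-(D * ((x ^ α : ℝ) : ℂ))) - Complex.exp (-(x:ℂ))) / (x:ℂ)) (Ioi 0) := by
  have hcont : ContinuousOn (fun x : ℝ =>
      (Complex.exp (-(D * ((x ^ α : ℝ) : ℂ))) - Complex.exp (-(x:ℂ))) / (x:ℂ)) (Ioi 0) := by
    apply ContinuousOn.div
    · apply ContinuousOn.sub
      · apply Complex.continuous_exp.comp_continuousOn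
        apply ContinuousOn.neg
        apply ContinuousOn.mul continuousOn_const
        apply Complex.continuous_ofReal.comp_continuousOn
        intro x hx
        exact (Real.continuousAt_rpow_const x α (Or.inl (ne_of_gt hx))).continuousWithinAt
      · exact (Complex.continuous_exp.comp (Complex.continuous_ofReal.neg)).continuousOn
    · exact Complex.continuous_ofReal.continuousOn
    · intro x hx
      exact Complex.ofReal_ne_zero.mpr (ne_of_gt hx)
  rw [← Ioc_union_Ioi_eq_Ioi (zero_le_one' ℝ), integrableOn_union]
  constructor
  · -- near zero
    have hg : IntegrableOn (fun x : ℝ => ‖D‖ * x^(α-1) + 1) (Ioc (0:ℝ) 1) := by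
      refine Integrable.add ?_ (integrableOn_const measure_Ioc_lt_top.ne)
      exact ((intervalIntegral.intervalIntegrable_rpow'
        (by linarith : (-1:ℝ) < α - 1)).1).const_mul ‖D‖
    refine Integrable.mono' hg
      ((hcont.mono Ioc_subset_Ioi_self).aestronglyMeasurable measurableSet_Ioc) ?_
    filter_upwards [ae_restrict_mem measurableSet_Ioc] with x hx
    obtain ⟨hx0, hx1⟩ := hx
    have hxne : x ≠ 0 := ne_of_gt hx0
    have hre1 : (0:ℝ) ≤ (D * ((x ^ α : ℝ) : ℂ)).re := by
      simp only [Complex.mul_re, Complex.ofReal_re, Complex.ofReal_im, mul_zero, sub_zero]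
      positivity
    have hre2 : (0:ℝ) ≤ ((x:ℂ)).re := by simpa using hx0.le
    have hn : ‖Complex.exp (-(D * ((x ^ α : ℝ) : ℂ))) - Complex.exp (-(x:ℂ))‖
        ≤ ‖D‖ * x^α + x := by
      refine (exp_sub_exp_norm_le hre1 hre2).trans ?_
      refine (norm_sub_le _ _).trans ?_
      rw [norm_mul, Complex.norm_real, Complex.norm_real, Real.norm_eq_abs, Real.norm_eq_abs,
        abs_of_pos hx0, _root_.abs_of_nonneg (Real.rpow_nonneg hx0.le α)]
    calc ‖(Complex.exp (-(D * ((x ^ α : ℝ) : ℂ))) - Complex.exp (-(x:ℂ))) / (x:ℂ)‖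
        = ‖Complex.exp (-(D * ((x ^ α : ℝ) : ℂ))) - Complex.exp (-(x:ℂ))‖ / x := by
          rw [norm_div, Complex.norm_real, Real.norm_eq_abs, abs_of_pos hx0]
      _ ≤ (‖D‖ * x^α + x) / x := by gcongr
      _ = ‖D‖ * x^(α-1) + 1 := by
          rw [add_div, mul_div_assoc, ← Real.rpow_sub_one hxne, div_self hxne]
  · -- near infinity
    set a := D.re with ha_def
    have ha : 0 < a := hD
    have hint1 : IntegrableOn (fun x : ℝ => x^(α-1) * Real.exp (-(a * x^α))) (Ioi 1) := by
      refine integrableOn_Ioi_deriv_of_nonneg' (g := fun x => -Real.exp (-(a * x^α))/(a*α))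
        (l := 0) ?_ ?_ ?_
      · intro x hx
        have hx0 : x ≠ 0 := by intro h; rw [h] at hx; simp at hx; linarith [hx]
        have h1 : HasDerivAt (fun x : ℝ => x^α) (α * x^(α-1)) x :=
          Real.hasDerivAt_rpow_const (Or.inl hx0)
        have h2 : HasDerivAt (fun x : ℝ => -(a * x^α)) (-(a * (α * x^(α-1)))) x :=
          (h1.const_mul a).neg
        have h3 := (Real.hasDerivAt_exp _).comp x h2
        have h4 := (h3.neg).div_const (a*α)
        refine h4.congr_deriv ?_
        have hα' : α ≠ 0 := ne_of_gt hα0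
        have ha' : a ≠ 0 := ne_of_gt ha
        field_simp
      · intro x hx
        have hx0 : (0:ℝ) < x := lt_trans zero_lt_one hx
        positivity
      · have hcore : Tendsto (fun x : ℝ => Real.exp (-(a * x^α))) atTop (nhds 0) := by
          apply Real.tendsto_exp_atBot.comp
          apply tendsto_neg_atTop_atBot.comp
          exact (tendsto_rpow_atTop hα0).const_mul_atTop ha
        have := (hcore.neg).div_const (a*α)
        simpa using this
    have hint2 : IntegrableOn (fun x : ℝ => Real.exp (-x)) (Ioi 1) := by
      have := exp_neg_integrableOn_Ioi (1:ℝ) (zero_lt_one)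
      simpa [neg_one_mul] using this
    refine Integrable.mono' (hint1.add hint2)
      ((hcont.mono (Ioi_subset_Ioi zero_le_one)).aestronglyMeasurable measurableSet_Ioi) ?_
    filter_upwards [ae_restrict_mem measurableSet_Ioi] with x hx
    have hx1 : (1:ℝ) < x := hx
    have hx0 : (0:ℝ) < x := lt_trans zero_lt_one hx1
    have hn1 : ‖Complex.exp (-(D * ((x ^ α : ℝ) : ℂ)))‖ = Real.exp (-(a * x^α)) := by
      rw [Complex.norm_exp]
      congr 1
      simp [Complex.mul_re, ha_def]
    have hn2 : ‖Complex.exp (-(x:ℂ))‖ = Real.exp (-x) := by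
      simp [Complex.norm_exp]
    calc ‖(Complex.exp (-(D * ((x ^ α : ℝ) : ℂ))) - Complex.exp (-(x:ℂ))) / (x:ℂ)‖
        = ‖Complex.exp (-(D * ((x ^ α : ℝ) : ℂ))) - Complex.exp (-(x:ℂ))‖ / x := by
          rw [norm_div, Complex.norm_real, Real.norm_eq_abs, abs_of_pos hx0]
      _ ≤ (Real.exp (-(a * x^α)) + Real.exp (-x)) / x := by
          gcongr
          refine (norm_sub_le _ _).trans ?_
          rw [hn1, hn2]
      _ = Real.exp (-(a * x^α)) / x + Real.exp (-x) / x := add_div _ _ _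
      _ ≤ x^(α-1) * Real.exp (-(a * x^α)) + Real.exp (-x) := by
          gcongr
          · rw [div_eq_mul_inv, mul_comm]
            gcongr
            calc x⁻¹ = x ^ (-1:ℝ) := (Real.rpow_neg_one x).symm
              _ ≤ x ^ (α-1) := Real.rpow_le_rpow_of_exponent_le hx1.le (by linarith)
          · exact div_le_self (Real.exp_pos _).le hx1.le



lemma div_negI_mul (w : ℂ) {x : ℝ} (hx : x ≠ 0) :
    w / (-Complex.I * (x:ℂ)) = Complex.I * (w / (x:ℂ)) := by
  have h1 : (x:ℂ) ≠ 0 := Complex.ofReal_ne_zero.mpr hx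
  field_simp
  ring_nf
  rw [Complex.I_sq]
  ring

lemma div_I_mul (w : ℂ) {x : ℝ} (hx : x ≠ 0) :
    w / (Complex.I * (x:ℂ)) = -Complex.I * (w / (x:ℂ)) := by
  have h1 : (x:ℂ) ≠ 0 := Complex.ofReal_ne_zero.mpr hx
  field_simp
  ring_nf
  rw [Complex.I_sq]
  ring

/-- For α ∈ (0,2), α ≠ 1, Re C₊ > 0:
J₋₁(α,C₊) = (1/(2π)) ∫ (e^{−ψ(ξ)} − e^{−|ξ|})/(−iξ) dξ = φ₀/(απ), φ₀ = arg C₊. -/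
theorem stmt_5 (α : ℝ) (C : ℂ) (hα : α ∈ Set.Ioo (0 : ℝ) 2) (hα1 : α ≠ 1)
    (hC : 0 < C.re) :
    (1 / (2 * Real.pi) : ℂ) *
      (∫ ξ : ℝ, (Complex.exp (-psiStable α C ξ) - Complex.exp (-(|ξ| : ℝ))) /
        (-Complex.I * (ξ : ℂ))) =
    ((Complex.arg C / (α * Real.pi) : ℝ) : ℂ) := by
  obtain ⟨hα0, hα2⟩ := hα
  set a : ℝ := C.re with ha_def
  set b : ℝ := C.im with hb_def
  set f : ℝ → ℂ := fun ξ =>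
    (Complex.exp (-psiStable α C ξ) - Complex.exp (-(|ξ| : ℝ))) / (-Complex.I * (ξ : ℂ)) with hf
  -- pointwise descriptions
  have hpsi_pos : ∀ x : ℝ, 0 < x → psiStable α C x = C * ((x ^ α : ℝ) : ℂ) := by
    intro x hx
    rw [psiStable, if_pos hx.le, abs_of_pos hx, Complex.ofReal_cpow hx.le]
  have hpsi_neg : ∀ x : ℝ, 0 < x →
      psiStable α C (-x) = (starRingEnd ℂ) C * ((x ^ α : ℝ) : ℂ) := by
    intro x hx
    rw [psiStable, if_neg (by simpa using not_le.mpr hx), abs_neg, abs_of_pos hx,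
      Complex.ofReal_cpow hx.le]
  have hfpos : ∀ x : ℝ, 0 < x → f x =
      Complex.I * ((Complex.exp (-(C * ((x ^ α : ℝ) : ℂ))) - Complex.exp (-(x:ℂ))) / (x:ℂ)) := by
    intro x hx
    rw [hf]
    simp only
    rw [hpsi_pos x hx, abs_of_pos hx, div_negI_mul _ (ne_of_gt hx)]
  have hfneg : ∀ x : ℝ, 0 < x → f (-x) =
      -Complex.I * ((Complex.exp (-((starRingEnd ℂ) C * ((x ^ α : ℝ) : ℂ)))
        - Complex.exp (-(x:ℂ))) / (x:ℂ)) := by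
    intro x hx
    rw [hf]
    simp only
    rw [hpsi_neg x hx, abs_neg, abs_of_pos hx]
    have : ((-x : ℝ) : ℂ) = -(x:ℂ) := by push_cast; ring
    rw [this]
    have h2 : -Complex.I * -(x:ℂ) = Complex.I * (x:ℂ) := by ring
    rw [h2, div_I_mul _ (ne_of_gt hx)]
  -- integrability
  have hconjre : 0 < ((starRingEnd ℂ) C).re := by simpa using hC
  have hIoi : IntegrableOn f (Ioi (0:ℝ)) := by
    refine IntegrableOn.congr_fun ((model_integrable hα0 hα2 hC).const_mul Complex.I) ?_
      measurableSet_Ioi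
    intro x hx
    exact (hfpos x hx).symm
  have hIoiNeg : IntegrableOn (fun x => f (-x)) (Ioi (0:ℝ)) := by
    refine IntegrableOn.congr_fun ((model_integrable hα0 hα2 hconjre).const_mul (-Complex.I)) ?_
      measurableSet_Ioi
    intro x hx
    exact (hfneg x hx).symm
  have hA : MeasurableEmbedding (fun x : ℝ => -x) :=
    (Homeomorph.neg ℝ).isClosedEmbedding.measurableEmbedding
  have hIic : IntegrableOn f (Iic (0:ℝ)) := by
    have hmap : (volume : Measure ℝ).restrict (Iic (0:ℝ))
        = Measure.map (fun x : ℝ => -x) ((volume : Measure ℝ).restrict (Ici (0:ℝ))) := by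
      rw [← Measure.map_neg_eq_self (volume : Measure ℝ)]
      have := Measure.restrict_map (μ := (volume : Measure ℝ))
        (measurable_neg : Measurable (fun x : ℝ => -x)) (measurableSet_Iic (a := (0:ℝ)))
      rw [this]
      congr 1
      ext x
      simp
    rw [IntegrableOn, hmap, hA.integrable_map_iff]
    have : IntegrableOn (fun x => f (-x)) (Ici (0:ℝ)) := by
      rwa [integrableOn_Ici_iff_integrableOn_Ioi]
    exact this
  have hInt : Integrable f := by
    rw [← integrableOn_univ, ← Set.Iic_union_Ioi (a := (0:ℝ))]
    exact hIic.union hIoi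
  -- the symmetrization identity
  have hsum : ∀ x : ℝ, 0 < x → f (-x) + f x =
      (((2:ℝ) * (Real.exp (-(a * x^α)) * Real.sin (b * x^α) / x) : ℝ) : ℂ) := by
    intro x hx
    rw [hfpos x hx, hfneg x hx]
    have hW : Complex.exp (-((starRingEnd ℂ) C * ((x ^ α : ℝ) : ℂ)))
        = (starRingEnd ℂ) (Complex.exp (-(C * ((x ^ α : ℝ) : ℂ)))) := by
      rw [← Complex.exp_conj]
      congr 1
      simp [map_neg, map_mul, Complex.conj_ofReal]
    rw [hW]
    set W : ℂ := Complex.exp (-(C * ((x ^ α : ℝ) : ℂ))) with hWdef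
    have him : W.im = -(Real.exp (-(a * x^α)) * Real.sin (b * x^α)) := by
      rw [hWdef, Complex.exp_im]
      simp only [Complex.neg_re, Complex.neg_im, Complex.mul_re, Complex.mul_im,
        Complex.ofReal_re, Complex.ofReal_im, mul_zero, sub_zero, zero_add, Real.sin_neg]
      ring
    have hsub : W - (starRingEnd ℂ) W = (2 * W.im : ℝ) * Complex.I := Complex.sub_conj W
    have hx0 : (x:ℂ) ≠ 0 := Complex.ofReal_ne_zero.mpr (ne_of_gt hx)
    have lhs_eq : -Complex.I * (((starRingEnd ℂ) W - Complex.exp (-(x:ℂ))) / (x:ℂ))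
        + Complex.I * ((W - Complex.exp (-(x:ℂ))) / (x:ℂ))
        = Complex.I * ((W - (starRingEnd ℂ) W) / (x:ℂ)) := by
      field_simp
      ring
    rw [lhs_eq, hsub, him]
    push_cast
    field_simp
    ring_nf
    rw [Complex.I_sq]
    ring
  -- compute the integral
  have step1 : (∫ ξ : ℝ, f ξ) = (∫ x in Iic (0:ℝ), f x) + ∫ x in Ioi (0:ℝ), f x :=
    (intervalIntegral.integral_Iic_add_Ioi hIic hIoi).symm
  have step2 : (∫ x in Iic (0:ℝ), f x) = ∫ x in Ioi (0:ℝ), f (-x) := by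
    have := integral_comp_neg_Ioi (0:ℝ) f
    simpa using this.symm
  have step3 : (∫ x in Ioi (0:ℝ), f (-x)) + (∫ x in Ioi (0:ℝ), f x)
      = ∫ x in Ioi (0:ℝ), (f (-x) + f x) := (integral_add hIoiNeg hIoi).symm
  have step4 : (∫ x in Ioi (0:ℝ), (f (-x) + f x))
      = ∫ x in Ioi (0:ℝ), (((2:ℝ) * (Real.exp (-(a * x^α)) * Real.sin (b * x^α) / x) : ℝ) : ℂ) := by
    refine setIntegral_congr_fun measurableSet_Ioi ?_
    intro x hx
    exact hsum x hx
  have step5 : (∫ x in Ioi (0:ℝ),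
        (((2:ℝ) * (Real.exp (-(a * x^α)) * Real.sin (b * x^α) / x) : ℝ) : ℂ))
      = (((∫ x in Ioi (0:ℝ), (2:ℝ) * (Real.exp (-(a * x^α)) * Real.sin (b * x^α) / x)) : ℝ) : ℂ) :=
    integral_ofReal
  -- change of variables
  have step6 : (∫ x in Ioi (0:ℝ), (2:ℝ) * (Real.exp (-(a * x^α)) * Real.sin (b * x^α) / x))
      = (2/α) * Real.arctan (b/a) := by
    have key := integral_comp_rpow_Ioi
      (fun u => (2/α) * (Real.exp (-(a*u)) * Real.sin (b*u) / u)) (ne_of_gt hα0)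
    have heq : ∀ x ∈ Ioi (0:ℝ),
        (|α| * x ^ (α - 1)) • ((2/α) * (Real.exp (-(a*x^α)) * Real.sin (b*x^α) / x^α))
        = (2:ℝ) * (Real.exp (-(a * x^α)) * Real.sin (b * x^α) / x) := by
      intro x hx
      have hxne : x ≠ 0 := ne_of_gt hx
      have hxa : (0:ℝ) < x ^ α := Real.rpow_pos_of_pos hx α
      rw [abs_of_pos hα0, smul_eq_mul, Real.rpow_sub_one hxne]
      field_simp
    rw [← setIntegral_congr_fun measurableSet_Ioi heq, key]
    rw [integral_const_mul, lemA hC b]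
  -- final arithmetic
  have harg : Complex.arg C = Real.arctan (b / a) := by
    have h1 : |Complex.arg C| < Real.pi/2 := Complex.abs_arg_lt_pi_div_two_iff.mpr (Or.inl hC)
    obtain ⟨h2, h3⟩ := abs_lt.mp h1
    rw [← Complex.tan_arg C, Real.arctan_tan (by linarith) (by linarith)]
  rw [step1, step2, step3, step4, step5, step6, harg]
  have hπ : Real.pi ≠ 0 := Real.pi_ne_zero
  have hαne : α ≠ 0 := ne_of_gt hα0
  push_cast
  field_simp

end Aux
end

section
/- For α ∈ (0,2), C₊ with Re(C₊ e^{iαφ}) > 0 for all φ in an interval, and x' ≠ 0, the function f(y) = e^{y} [ e^{−ix' e^{iω+y} − C₊ e^{α(iω+y)}} − e^{−C₊ e^{α(iω+y)}} ] satisfies, as y → −∞, f(y) = −ix' e^{iω} e^{2y} + R(y), where |R(y)| ≤ C(y) ( (x')² e^{3y}/2 + |x'||C₊| e^{(2+α)y} ) with C(y) → 1 as y → −∞. -/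
open Complex Filter Set

lemma hasSum_exp_div (z : ℂ) : HasSum (fun n : ℕ => z ^ n / n.factorial) (Complex.exp z) := by
  rw [Complex.exp_eq_exp_ℂ, NormedSpace.exp_eq_tsum_div]
  exact (NormedSpace.expSeries_div_summable z).hasSum

lemma hasSum_rexp_div (x : ℝ) : HasSum (fun n : ℕ => x ^ n / n.factorial) (Real.exp x) := by
  rw [Real.exp_eq_exp_ℝ, NormedSpace.exp_eq_tsum_div]
  exact (NormedSpace.expSeries_div_summable x).hasSum

lemma abs_exp_sub_one_le' (w : ℂ) :
    ‖Complex.exp w - 1‖ ≤ ‖w‖ * Real.exp (‖w‖) := by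
  have h := hasSum_exp_div w
  have h1 : HasSum (fun n : ℕ => w ^ (n + 1) / (n + 1).factorial) (Complex.exp w - 1) := by
    have := (hasSum_nat_add_iff' (f := fun n : ℕ => w ^ n / n.factorial) 1).mpr h
    simpa using this
  have hg : HasSum (fun n : ℕ => ‖w‖ * ((‖w‖) ^ n / n.factorial))
      (‖w‖ * Real.exp (‖w‖)) := (hasSum_rexp_div (‖w‖)).mul_left _
  refine h1.norm_le_of_bounded hg fun n => ?_
  simp only [norm_div, norm_pow, RCLike.norm_natCast]
  rw [pow_succ, mul_comm ((‖w‖) ^ n), mul_div_assoc]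
  gcongr
  · exact Nat.le_succ n

lemma abs_exp_sub_one_sub_le' (z : ℂ) :
    ‖Complex.exp z - 1 - z‖ ≤
      (‖z‖) ^ 2 / 2 * Real.exp (‖z‖) := by
  have h := hasSum_exp_div z
  have h1 : HasSum (fun n : ℕ => z ^ (n + 2) / (n + 2).factorial)
      (Complex.exp z - 1 - z) := by
    have := (hasSum_nat_add_iff' (f := fun n : ℕ => z ^ n / n.factorial) 2).mpr h
    simpa [Finset.sum_range_succ, sub_sub] using this
  have hg : HasSum (fun n : ℕ => (‖z‖) ^ 2 / 2 * ((‖z‖) ^ n / n.factorial))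
      ((‖z‖) ^ 2 / 2 * Real.exp (‖z‖)) :=
    (hasSum_rexp_div (‖z‖)).mul_left _
  refine h1.norm_le_of_bounded hg fun n => ?_
  simp only [norm_div, norm_pow, RCLike.norm_natCast]
  have hfac : (2 : ℝ) * n.factorial ≤ ((n + 2).factorial : ℝ) := by
    have : 2 * n.factorial ≤ (n + 2).factorial := by
      calc 2 * n.factorial ≤ (n + 2) * n.factorial := by
            exact Nat.mul_le_mul_right _ (by omega)
        _ ≤ (n + 2) * (n + 1).factorial :=
            Nat.mul_le_mul_left _ (Nat.factorial_le (Nat.le_succ n))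
        _ = (n + 2).factorial := (Nat.factorial_succ (n + 1)).symm
    exact_mod_cast this
  calc (‖z‖) ^ (n + 2) / ((n + 2).factorial : ℝ)
      ≤ (‖z‖) ^ (n + 2) / (2 * n.factorial) := by
        gcongr
    _ = (‖z‖) ^ 2 / 2 * ((‖z‖) ^ n / n.factorial) := by
        rw [pow_add]; ring

/-- Asymptotic expansion near y = −∞ of the integrand of the simplified conic
trapezoid rule for the pdf: with
f(y) = e^y [e^{−ix'e^{iω+y} − Cpe^{α(iω+y)}} − e^{−Cpe^{α(iω+y)}}],
one has f(y) = −ix'e^{iω}e^{2y} + R(y), where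
|R(y)| ≤ C(y)((x')²e^{3y}/2 + |x'||Cp|e^{(2+α)y}) and C(y) → 1 as y → −∞. -/
theorem stmt_10 (α x' ω φ₁ φ₂ : ℝ) (Cp : ℂ) (hα : α ∈ Set.Ioo (0 : ℝ) 2)
    (hx' : x' ≠ 0) (hφ : φ₁ < φ₂)
    (hC : ∀ φ ∈ Set.Ioo φ₁ φ₂,
      0 < (Cp * Complex.exp (Complex.I * (α : ℂ) * (φ : ℂ))).re) :
    ∃ Cf : ℝ → ℝ, Tendsto Cf atBot (nhds 1) ∧
      ∀ y : ℝ,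
        ‖((Complex.exp (y : ℂ) *
              (Complex.exp (-Complex.I * (x' : ℂ) *
                    Complex.exp (Complex.I * (ω : ℂ) + (y : ℂ)) -
                  Cp * Complex.exp ((α : ℂ) * (Complex.I * (ω : ℂ) + (y : ℂ)))) -
                Complex.exp (-(Cp *
                  Complex.exp ((α : ℂ) * (Complex.I * (ω : ℂ) + (y : ℂ))))))) -
            (-Complex.I * (x' : ℂ) * Complex.exp (Complex.I * (ω : ℂ)) *
              Complex.exp (2 * (y : ℂ))))‖ ≤
        Cf y * (x' ^ 2 * Real.exp (3 * y) / 2 +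
          |x'| * ‖Cp‖ * Real.exp ((2 + α) * y)) := by
  refine ⟨fun y => Real.exp (|x'| * Real.exp y + ‖Cp‖ * Real.exp (α * y)), ?_, ?_⟩
  · have h1 : Tendsto (fun y : ℝ => Real.exp y) atBot (nhds 0) := Real.tendsto_exp_atBot
    have h2 : Tendsto (fun y : ℝ => Real.exp (α * y)) atBot (nhds 0) :=
      Real.tendsto_exp_atBot.comp (Tendsto.const_mul_atBot hα.1 tendsto_id)
    have hsum : Tendsto (fun y : ℝ =>
        |x'| * Real.exp y + ‖Cp‖ * Real.exp (α * y)) atBot (nhds 0) := by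
      have := (h1.const_mul |x'|).add (h2.const_mul (‖Cp‖))
      simpa using this
    have := (Real.continuous_exp.tendsto 0).comp hsum
    simpa [Function.comp_def] using this
  · intro y
    set z : ℂ := -Complex.I * (x' : ℂ) * Complex.exp (Complex.I * (ω : ℂ) + (y : ℂ)) with hz
    set w : ℂ := -(Cp * Complex.exp ((α : ℂ) * (Complex.I * (ω : ℂ) + (y : ℂ)))) with hw
    have habsz : ‖z‖ = |x'| * Real.exp y := by
      simp [hz, Complex.norm_exp]
    have habsw : ‖w‖ = ‖Cp‖ * Real.exp (α * y) := by
      simp [hw, Complex.norm_exp]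
    -- rewrite the target of the abs as e^y * (e^w(e^z-1-z) + (e^w-1)z)
    have hkey : (Complex.exp (y : ℂ) *
          (Complex.exp (-Complex.I * (x' : ℂ) *
                Complex.exp (Complex.I * (ω : ℂ) + (y : ℂ)) -
              Cp * Complex.exp ((α : ℂ) * (Complex.I * (ω : ℂ) + (y : ℂ)))) -
            Complex.exp (-(Cp *
              Complex.exp ((α : ℂ) * (Complex.I * (ω : ℂ) + (y : ℂ))))))) -
        (-Complex.I * (x' : ℂ) * Complex.exp (Complex.I * (ω : ℂ)) *
          Complex.exp (2 * (y : ℂ))) =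
        Complex.exp (y : ℂ) *
          (Complex.exp w * (Complex.exp z - 1 - z) + (Complex.exp w - 1) * z) := by
      have e1 : Complex.exp (-Complex.I * (x' : ℂ) *
            Complex.exp (Complex.I * (ω : ℂ) + (y : ℂ)) -
          Cp * Complex.exp ((α : ℂ) * (Complex.I * (ω : ℂ) + (y : ℂ)))) =
          Complex.exp z * Complex.exp w := by
        rw [hz, hw, ← Complex.exp_add, sub_eq_add_neg]
      have e2 : -Complex.I * (x' : ℂ) * Complex.exp (Complex.I * (ω : ℂ)) *
          Complex.exp (2 * (y : ℂ)) = Complex.exp (y : ℂ) * z := by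
        simp only [hz, two_mul, Complex.exp_add]
        ring
      rw [e1, e2, ← hw]; ring
    rw [hkey]
    have hbound : ‖Complex.exp (y : ℂ) *
          (Complex.exp w * (Complex.exp z - 1 - z) + (Complex.exp w - 1) * z)‖ ≤
        Real.exp y * (Real.exp (‖w‖) *
            ((‖z‖) ^ 2 / 2 * Real.exp (‖z‖)) +
          (‖w‖ * Real.exp (‖w‖)) * ‖z‖) := by
      rw [norm_mul]
      have hy : ‖Complex.exp (y : ℂ)‖ = Real.exp y := by
        simp [Complex.norm_exp]
      rw [hy]
      gcongr
      refine (norm_add_le _ _).trans ?_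
      rw [norm_mul, norm_mul]
      gcongr
      · rw [Complex.norm_exp]
        exact Real.exp_le_exp.mpr (Complex.re_le_norm w)
      · exact abs_exp_sub_one_sub_le' z
      · exact abs_exp_sub_one_le' w
    refine hbound.trans ?_
    rw [habsz, habsw]
    have h3 : Real.exp (3 * y) = Real.exp y * Real.exp y * Real.exp y := by
      rw [show (3 : ℝ) * y = y + y + y by ring, Real.exp_add, Real.exp_add]
    have h2a : Real.exp ((2 + α) * y) = Real.exp y * Real.exp y * Real.exp (α * y) := by
      rw [show (2 + α) * y = y + y + α * y by ring, Real.exp_add, Real.exp_add]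
    simp only [Real.exp_add, h3, h2a]
    have hx2 : |x'| ^ 2 = x' ^ 2 := sq_abs x'
    have hey : (0:ℝ) < Real.exp y := Real.exp_pos y
    have hea : (0:ℝ) < Real.exp (α * y) := Real.exp_pos _
    have hez : (1:ℝ) ≤ Real.exp (|x'| * Real.exp y) :=
      Real.one_le_exp (by positivity)
    have hew : (0:ℝ) < Real.exp (‖Cp‖ * Real.exp (α * y)) := Real.exp_pos _
    have hax : (0:ℝ) ≤ |x'| := abs_nonneg x'
    have haC : (0:ℝ) ≤ ‖Cp‖ := norm_nonneg _
    have key : (0:ℝ) ≤ (Real.exp (|x'| * Real.exp y) - 1) *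
        Real.exp (‖Cp‖ * Real.exp (α * y)) *
        (|x'| * ‖Cp‖ * (Real.exp y * Real.exp y * Real.exp (α * y))) := by
      have h0 : (0:ℝ) ≤ Real.exp (|x'| * Real.exp y) - 1 := by linarith
      positivity
    rw [← hx2]
    nlinarith [key]
end

section
/- Let α ∈ (0,1), x' < 0, and C₊ = |C₊|e^{iφ₀}. Then the exponential change of variables ξ = e^{iω+y} with ω = π/2 yields the real-integral representation p(x') = (1/π) ∫_{ℝ} e^{y + x' e^{y} − |C₊| cos(φ₀ + απ/2) e^{αy}} · sin(|C₊| sin(φ₀ + απ/2) e^{αy}) dy for the stable density p(x') = (1/π) Re ∫₀^∞ e^{−ix'ξ − C₊ξ^α} dξ, provided −x' sin γ + |C₊| cos(φ₀ + αγ) > 0 for all γ in a neighborhood of π/2 (so the contour deformation from ℝ₊ to iℝ₊ is justified). -/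
open Complex Set

set_option maxHeartbeats 2000000

open Filter MeasureTheory Topology in
private lemma stmt11_aux2 (a q α : ℝ) (hq : q < 0) (hα : 0 < α) :
    Tendsto (fun y => a*y + q * Real.exp (α*y)) atTop atBot := by
  have h1 : Tendsto (fun y : ℝ => Real.exp (α*y)) atTop atTop :=
    Real.tendsto_exp_atTop.comp (tendsto_id.const_mul_atTop hα)
  have h2 : Tendsto (fun y : ℝ => a*y / Real.exp (α*y) + q) atTop (𝓝 (0 + q)) := by
    refine Tendsto.add_const q ?_
    have h3 : Tendsto (fun y : ℝ => (α*y) / Real.exp (α*y)) atTop (𝓝 0) := by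
      have := (Real.tendsto_pow_mul_exp_neg_atTop_nhds_zero 1)
      have := this.comp (tendsto_id.const_mul_atTop hα)
      simpa [Function.comp_def, Real.exp_neg, div_eq_mul_inv] using this
    have h4 := h3.const_mul (a/α)
    simp only [mul_zero] at h4
    refine h4.congr' ?_
    filter_upwards [eventually_gt_atTop 0] with y hy
    field_simp
  have := h1.atTop_mul_neg (by linarith : (0:ℝ) + q < 0) h2
  refine this.congr' ?_
  filter_upwards [eventually_gt_atTop 0] with y hy
  have : Real.exp (α*y) ≠ 0 := (Real.exp_pos _).ne'
  field_simp

open Filter MeasureTheory Topology in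
private lemma stmt11_aux1 (a p q α : ℝ) (hp : p < 0) (hα : α < 1) :
    Tendsto (fun y => a*y + p * Real.exp y + q * Real.exp (α*y)) atTop atBot := by
  have h1 : Tendsto Real.exp atTop atTop := Real.tendsto_exp_atTop
  have h3 : Tendsto (fun y : ℝ => a*y / Real.exp y) atTop (𝓝 0) := by
    have := (Real.tendsto_pow_mul_exp_neg_atTop_nhds_zero 1).const_mul a
    simpa [Real.exp_neg, div_eq_mul_inv, mul_assoc, mul_zero] using this
  have h4 : Tendsto (fun y : ℝ => q * Real.exp ((α-1)*y)) atTop (𝓝 0) := by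
    have : Tendsto (fun y : ℝ => (α-1)*y) atTop atBot := by
      have := tendsto_const_mul_atBot_of_neg (l := atTop) (f := fun y : ℝ => y)
        (by linarith : α - 1 < 0)
      exact this.mpr tendsto_id
    simpa using (Real.tendsto_exp_atBot.comp this).const_mul q
  have h2 : Tendsto (fun y : ℝ => a*y / Real.exp y + p + q * Real.exp ((α-1)*y))
      atTop (𝓝 (0 + p + 0)) := (h3.add_const p).add h4
  have := h1.atTop_mul_neg (by linarith : (0:ℝ) + p + 0 < 0) h2
  refine this.congr' ?_
  filter_upwards [eventually_gt_atTop 0] with y hy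
  have he : Real.exp y ≠ 0 := (Real.exp_pos _).ne'
  have hee : Real.exp ((α-1)*y) = Real.exp (α*y) / Real.exp y := by
    rw [eq_div_iff he, ← Real.exp_add]; ring_nf
  rw [hee]
  field_simp

open Filter MeasureTheory Topology in
private lemma stmt11_auxI (α p q : ℝ) (hα : 0 < α) (hα1 : α < 1)
    (h : p < 0 ∨ (p = 0 ∧ q < 0)) :
    Integrable (fun y => Real.exp (y + p * Real.exp y + q * Real.exp (α*y))) := by
  have hcont : Continuous (fun y => Real.exp (y + p * Real.exp y + q * Real.exp (α*y))) := by
    fun_prop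
  rw [← integrableOn_univ, ← Set.Iic_union_Ioi (a := (0:ℝ)), integrableOn_union]
  constructor
  · refine Integrable.mono' ((integrableOn_exp_Iic 0).const_mul (Real.exp (|p| + |q|)))
      hcont.aestronglyMeasurable ?_
    rw [ae_restrict_iff' measurableSet_Iic]
    refine ae_of_all _ fun y hy => ?_
    simp only [Set.mem_Iic] at hy
    rw [Real.norm_eq_abs, Real.abs_exp, ← Real.exp_add]
    apply Real.exp_le_exp.2
    have h1 : Real.exp y ≤ 1 := Real.exp_le_one_iff.2 hy
    have h2 : Real.exp (α*y) ≤ 1 := Real.exp_le_one_iff.2 (by nlinarith)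
    have h3 : p * Real.exp y ≤ |p| := by
      calc p * Real.exp y ≤ |p| * Real.exp y :=
            mul_le_mul_of_nonneg_right (le_abs_self p) (Real.exp_pos y).le
        _ ≤ |p| * 1 := by nlinarith [abs_nonneg p]
        _ = |p| := mul_one _
    have h4 : q * Real.exp (α*y) ≤ |q| := by
      calc q * Real.exp (α*y) ≤ |q| * Real.exp (α*y) :=
            mul_le_mul_of_nonneg_right (le_abs_self q) (Real.exp_pos _).le
        _ ≤ |q| * 1 := by nlinarith [abs_nonneg q]
        _ = |q| := mul_one _
    linarith
  · have htend : Tendsto (fun y => Real.exp (2*y + p * Real.exp y + q * Real.exp (α*y)))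
        atTop (𝓝 0) := by
      apply Real.tendsto_exp_atBot.comp
      rcases h with hp | ⟨hp, hq⟩
      · exact stmt11_aux1 2 p q α hp hα1
      · simpa [hp] using stmt11_aux2 2 q α hq hα
    refine integrable_of_isBigO_exp_neg (a := 0) (b := 1) one_pos hcont.continuousOn ?_
    refine Asymptotics.IsBigO.of_bound 1 ?_
    filter_upwards [htend.eventually (eventually_le_nhds one_pos)] with y hy
    rw [Real.norm_eq_abs, Real.abs_exp, Real.norm_eq_abs, Real.abs_exp, one_mul]
    have : Real.exp (y + p * Real.exp y + q * Real.exp (α*y))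
        = Real.exp (2*y + p * Real.exp y + q * Real.exp (α*y)) * Real.exp (-y) := by
      rw [← Real.exp_add]; ring_nf
    rw [this, neg_mul, one_mul]
    nlinarith [Real.exp_pos (-y), hy]

/-- For α ∈ (0,1), x' < 0, C₊ = |C₊|e^{iφ₀}, the exponential change of variables
ξ = e^{iπ/2+y} gives the real-integral representation of the stable pdf
p(x') = (1/π) Re ∫₀^∞ e^{−ix'ξ − C₊ξ^α} dξ
      = (1/π) ∫ℝ e^{y + x'e^y − |C₊|cos(φ₀+απ/2)e^{αy}} sin(|C₊|sin(φ₀+απ/2)e^{αy}) dy,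
provided −x' sin γ + |C₊| cos(φ₀ + αγ) > 0 for all γ in a neighborhood of π/2. -/
theorem stmt_11 (α x' d : ℝ) (Cp : ℂ) (hα : α ∈ Set.Ioo (0 : ℝ) 1) (hx' : x' < 0)
    (hCp : Cp ≠ 0)
    (hφ₀ : Complex.arg Cp ∈ Set.Icc (-(α * Real.pi / 2)) (α * Real.pi / 2))
    (hd : 0 < d)
    (hcone : ∀ γ ∈ Set.Ioo (Real.pi / 2 - d) (Real.pi / 2 + d),
      0 < -x' * Real.sin γ +
        ‖Cp‖ * Real.cos (Complex.arg Cp + α * γ)) :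
    (1 / Real.pi) * (∫ ξ in Set.Ioi (0 : ℝ),
        Complex.exp (-Complex.I * (x' : ℂ) * (ξ : ℂ) - Cp * (ξ : ℂ) ^ (α : ℂ))).re =
    (1 / Real.pi) * ∫ y : ℝ,
        Real.exp (y + x' * Real.exp y -
            ‖Cp‖ * Real.cos (Complex.arg Cp + α * Real.pi / 2) *
              Real.exp (α * y)) *
          Real.sin (‖Cp‖ * Real.sin (Complex.arg Cp + α * Real.pi / 2) *
            Real.exp (α * y)) := by
  open Filter MeasureTheory Topology in
  obtain ⟨hα0, hα1⟩ := hα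
  obtain ⟨hφlo, hφhi⟩ := hφ₀
  have hπ := Real.pi_pos
  set r := ‖Cp‖ with hrdef
  set φ := Complex.arg Cp with hφdef
  have hr0 : 0 < r := norm_pos_iff.mpr hCp
  have hφhalf : α * Real.pi / 2 < Real.pi / 2 := by nlinarith
  -- the entire function F
  set F : ℂ → ℂ := fun w =>
    Complex.exp (w - Complex.I * (x':ℂ) * Complex.exp w - Cp * Complex.exp ((α:ℂ) * w)) with hFdef
  have hFd : Differentiable ℂ F := by
    apply Complex.differentiable_exp.comp
    fun_prop
  have hCpeq : (r : ℂ) * Complex.exp ((φ:ℂ) * Complex.I) = Cp := Complex.norm_mul_exp_arg_mul_I Cp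
  -- re and im of the exponent
  have hre : ∀ y γ : ℝ,
      (((y:ℂ) + (γ:ℂ)*I) - I*(x':ℂ)*Complex.exp ((y:ℂ) + (γ:ℂ)*I)
        - Cp * Complex.exp ((α:ℂ)*((y:ℂ) + (γ:ℂ)*I))).re
      = y + x' * Real.exp y * Real.sin γ - r * Real.exp (α*y) * Real.cos (φ + α*γ) := by
    intro y γ
    rw [← hCpeq]
    simp [Complex.exp_re, Complex.exp_im, Complex.sub_re, Complex.mul_re, Complex.mul_im,
      Complex.add_re, Complex.add_im, Real.cos_add, Real.sin_add, Real.exp_add]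
    ring
  have him : ∀ y γ : ℝ,
      (((y:ℂ) + (γ:ℂ)*I) - I*(x':ℂ)*Complex.exp ((y:ℂ) + (γ:ℂ)*I)
        - Cp * Complex.exp ((α:ℂ)*((y:ℂ) + (γ:ℂ)*I))).im
      = γ - x' * Real.exp y * Real.cos γ - r * Real.exp (α*y) * Real.sin (φ + α*γ) := by
    intro y γ
    rw [← hCpeq]
    simp [Complex.exp_re, Complex.exp_im, Complex.sub_im, Complex.mul_re, Complex.mul_im,
      Complex.add_re, Complex.add_im, Real.cos_add, Real.sin_add, Real.exp_add]
    ring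
  have hnorm : ∀ y γ : ℝ, ‖F ((y:ℂ) + (γ:ℂ)*I)‖
      = Real.exp (y + x' * Real.exp y * Real.sin γ - r * Real.exp (α*y) * Real.cos (φ + α*γ)) := by
    intro y γ
    rw [hFdef]
    simp only [Complex.norm_exp]
    rw [hre y γ]
  have hcoe0 : ∀ y : ℝ, ((y:ℂ) + ((0:ℝ):ℂ)*I) = (y:ℂ) := by intro y; simp
  -- integrability on the two horizontal lines
  have hFcont : Continuous F := hFd.continuous
  have hint0 : Integrable (fun y : ℝ => F (y:ℂ)) := by
    have hq : -(r * Real.cos φ) < 0 := by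
      have : 0 < Real.cos φ := Real.cos_pos_of_mem_Ioo ⟨by linarith, by linarith⟩
      nlinarith
    refine Integrable.mono' (stmt11_auxI α 0 (-(r * Real.cos φ)) hα0 hα1 (Or.inr ⟨rfl, hq⟩))
      ((hFcont.comp Complex.continuous_ofReal).aestronglyMeasurable) (ae_of_all _ fun y => ?_)
    rw [← hcoe0 y, hnorm y 0]
    apply le_of_eq
    rw [Real.exp_eq_exp]
    simp
    ring
  have hint1 : Integrable (fun y : ℝ => F ((y:ℂ) + ((Real.pi/2 : ℝ):ℂ)*I)) := by
    refine Integrable.mono' (stmt11_auxI α x' (-(r * Real.cos (φ + α*(Real.pi/2)))) hα0 hα1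
      (Or.inl hx'))
      ((hFcont.comp (by fun_prop)).aestronglyMeasurable) (ae_of_all _ fun y => ?_)
    rw [hnorm y (Real.pi/2)]
    apply le_of_eq
    rw [Real.exp_eq_exp]
    rw [Real.sin_pi_div_two]
    ring
  -- the rectangle contour identity
  have rect : ∀ R : ℝ,
      (∫ x in -R..R, F (x:ℂ)) - (∫ x in -R..R, F ((x:ℂ) + ((Real.pi/2:ℝ):ℂ)*I))
        + I • (∫ γ in (0:ℝ)..(Real.pi/2), F ((R:ℂ) + (γ:ℂ)*I))
        - I • (∫ γ in (0:ℝ)..(Real.pi/2), F (((-R : ℝ):ℂ) + (γ:ℂ)*I)) = 0 := by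
    intro R
    have := Complex.integral_boundary_rect_eq_zero_of_differentiableOn F (((-R:ℝ)):ℂ)
      ((R:ℂ) + ((Real.pi/2:ℝ):ℂ)*I) hFd.differentiableOn
    simpa using this
  -- the aperture for the uniform bound on the right vertical side
  set ε : ℝ := min ((1-α)*Real.pi/(4*α)) (Real.pi/2) with hεdef
  have hε0 : 0 < ε := lt_min (by apply div_pos <;> nlinarith) (by positivity)
  have hεle : ε ≤ Real.pi/2 := min_le_right _ _
  have hεbound : α*(Real.pi/2) + α*ε < Real.pi/2 := by
    have h1 : α*ε ≤ α*((1-α)*Real.pi/(4*α)) :=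
      mul_le_mul_of_nonneg_left (min_le_left _ _) hα0.le
    have h2 : α*((1-α)*Real.pi/(4*α)) = (1-α)*Real.pi/4 := by field_simp
    nlinarith
  set c : ℝ := Real.cos (α*(Real.pi/2) + α*ε) with hcdef
  have hc0 : 0 < c := Real.cos_pos_of_mem_Ioo ⟨by nlinarith, by nlinarith⟩
  have hsinε : 0 < Real.sin ε := Real.sin_pos_of_pos_of_lt_pi hε0 (by nlinarith)
  -- uniform bound on the right vertical side
  have hbig : ∀ R : ℝ, ∀ γ ∈ Set.uIoc (0:ℝ) (Real.pi/2),
      ‖F ((R:ℂ) + (γ:ℂ)*I)‖ ≤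
        max (Real.exp (R + -(c*r) * Real.exp (α*R)))
          (Real.exp (R + (x' * Real.sin ε) * Real.exp R + r * Real.exp (α*R))) := by
    intro R γ hγ
    rw [Set.uIoc_of_le (by positivity)] at hγ
    obtain ⟨hγ0, hγπ⟩ := hγ
    rw [hnorm R γ]
    have hsinγ : 0 ≤ Real.sin γ := Real.sin_nonneg_of_nonneg_of_le_pi hγ0.le (by nlinarith)
    have hexpR := Real.exp_pos R
    have hexpαR := Real.exp_pos (α*R)
    have hxe : x' * Real.exp R ≤ 0 := mul_nonpos_of_nonpos_of_nonneg hx'.le hexpR.le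
    by_cases hcase : γ ≤ ε
    · refine le_trans ?_ (le_max_left _ _)
      rw [Real.exp_le_exp]
      have hαγ : 0 ≤ α*γ := mul_nonneg hα0.le hγ0.le
      have hαγε : α*γ ≤ α*ε := mul_le_mul_of_nonneg_left hcase hα0.le
      have hB : c ≤ Real.cos (φ + α*γ) := by
        have habs : |φ + α*γ| ≤ α*(Real.pi/2) + α*ε := by
          rw [abs_le]
          constructor
          · nlinarith [mul_nonneg hα0.le hε0.le]
          · nlinarith
        calc c ≤ Real.cos |φ + α*γ| :=
              Real.cos_le_cos_of_nonneg_of_le_pi (abs_nonneg _) (by nlinarith) habs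
          _ = Real.cos (φ + α*γ) := Real.cos_abs _
      have hA : x' * Real.exp R * Real.sin γ ≤ 0 :=
        mul_nonpos_of_nonpos_of_nonneg hxe hsinγ
      have hprod : c * (r * Real.exp (α*R)) ≤ Real.cos (φ + α*γ) * (r * Real.exp (α*R)) :=
        mul_le_mul_of_nonneg_right hB (by positivity)
      nlinarith [hA, hprod]
    · push_neg at hcase
      refine le_trans ?_ (le_max_right _ _)
      rw [Real.exp_le_exp]
      have hsin : Real.sin ε ≤ Real.sin γ := by
        have := Real.strictMonoOn_sin.monotoneOn (a := ε) (b := γ)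
          ⟨by linarith, hεle⟩ ⟨by linarith, hγπ⟩ hcase.le
        simpa using this
      have hcosge : -1 ≤ Real.cos (φ + α*γ) := Real.neg_one_le_cos _
      have h1 : x' * Real.exp R * Real.sin γ ≤ x' * Real.exp R * Real.sin ε :=
        mul_le_mul_of_nonpos_left hsin hxe
      have h2 : -(Real.cos (φ + α*γ)) * (r * Real.exp (α*R)) ≤ 1 * (r * Real.exp (α*R)) :=
        mul_le_mul_of_nonneg_right (by linarith) (by positivity)
      nlinarith [h1, h2]
  -- right vertical side tends to zero
  have htendA : Filter.Tendsto (fun R : ℝ => Real.exp (R + -(c*r) * Real.exp (α*R)))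
      Filter.atTop (𝓝 0) := by
    have := Real.tendsto_exp_atBot.comp (stmt11_aux2 1 (-(c*r)) α (by nlinarith) hα0)
    simpa [Function.comp_def, one_mul] using this
  have htendB : Filter.Tendsto
      (fun R : ℝ => Real.exp (R + (x' * Real.sin ε) * Real.exp R + r * Real.exp (α*R)))
      Filter.atTop (𝓝 0) := by
    have := Real.tendsto_exp_atBot.comp
      (stmt11_aux1 1 (x' * Real.sin ε) r α (by nlinarith) hα1)
    simpa [Function.comp_def, one_mul] using this
  have hlim3 : Filter.Tendsto
      (fun R : ℝ => ∫ γ in (0:ℝ)..(Real.pi/2), F ((R:ℂ) + (γ:ℂ)*I)) Filter.atTop (𝓝 0) := by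
    apply squeeze_zero_norm (a := fun R =>
      max (Real.exp (R + -(c*r) * Real.exp (α*R)))
        (Real.exp (R + (x' * Real.sin ε) * Real.exp R + r * Real.exp (α*R))) * (Real.pi/2))
    · intro R
      have := intervalIntegral.norm_integral_le_of_norm_le_const (hbig R)
      simpa [_root_.abs_of_nonneg (by positivity : (0:ℝ) ≤ Real.pi/2)] using this
    · have := (htendA.max htendB).mul_const (Real.pi/2)
      simpa using this
  -- left vertical side tends to zero
  have hlim4 : Filter.Tendsto
      (fun R : ℝ => ∫ γ in (0:ℝ)..(Real.pi/2), F (((-R:ℝ):ℂ) + (γ:ℂ)*I))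
      Filter.atTop (𝓝 0) := by
    apply squeeze_zero_norm' (a := fun R : ℝ => Real.exp (r + -R) * (Real.pi/2))
    · filter_upwards [Filter.eventually_ge_atTop (0:ℝ)] with R hR
      have hb : ∀ γ ∈ Set.uIoc (0:ℝ) (Real.pi/2),
          ‖F (((-R:ℝ):ℂ) + (γ:ℂ)*I)‖ ≤ Real.exp (r + -R) := by
        intro γ hγ
        rw [Set.uIoc_of_le (by positivity)] at hγ
        obtain ⟨hγ0, hγπ⟩ := hγ
        rw [hnorm (-R) γ, Real.exp_le_exp]
        have hsinγ : 0 ≤ Real.sin γ := Real.sin_nonneg_of_nonneg_of_le_pi hγ0.le (by nlinarith)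
        have hexp1 : Real.exp (α*(-R)) ≤ 1 := Real.exp_le_one_iff.2 (by nlinarith)
        have hcosge : -1 ≤ Real.cos (φ + α*γ) := Real.neg_one_le_cos _
        have hexpp := Real.exp_pos (-R)
        have hA : x' * Real.exp (-R) * Real.sin γ ≤ 0 :=
          mul_nonpos_of_nonpos_of_nonneg
            (mul_nonpos_of_nonpos_of_nonneg hx'.le hexpp.le) hsinγ
        have hprod : -(Real.cos (φ + α*γ)) * (r * Real.exp (α*(-R)))
            ≤ 1 * (r * Real.exp (α*(-R))) :=
          mul_le_mul_of_nonneg_right (by linarith) (by positivity)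
        have hprod2 : r * Real.exp (α*(-R)) ≤ r * 1 :=
          mul_le_mul_of_nonneg_left hexp1 hr0.le
        nlinarith [hA, hprod, hprod2]
      have := intervalIntegral.norm_integral_le_of_norm_le_const hb
      simpa [_root_.abs_of_nonneg (by positivity : (0:ℝ) ≤ Real.pi/2)] using this
    · have h1 : Filter.Tendsto (fun R : ℝ => r + -R) Filter.atTop Filter.atBot :=
        Filter.tendsto_atBot_add_const_left _ r
          (Filter.tendsto_neg_atTop_atBot :
            Filter.Tendsto (fun R : ℝ => -R) Filter.atTop Filter.atBot)
      have := (Real.tendsto_exp_atBot.comp h1).mul_const (Real.pi/2)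
      simpa using this
  -- horizontal integrals converge to the full line integrals
  have hlim1 : Filter.Tendsto (fun R : ℝ => ∫ x in -R..R, F (x:ℂ)) Filter.atTop
      (𝓝 (∫ y : ℝ, F (y:ℂ))) :=
    intervalIntegral_tendsto_integral hint0 Filter.tendsto_neg_atTop_atBot Filter.tendsto_id
  have hlim2 : Filter.Tendsto
      (fun R : ℝ => ∫ x in -R..R, F ((x:ℂ) + ((Real.pi/2:ℝ):ℂ)*I)) Filter.atTop
      (𝓝 (∫ y : ℝ, F ((y:ℂ) + ((Real.pi/2:ℝ):ℂ)*I))) :=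
    intervalIntegral_tendsto_integral hint1 Filter.tendsto_neg_atTop_atBot Filter.tendsto_id
  -- pass to the limit in the rectangle identity
  have heq : (∫ y : ℝ, F (y:ℂ)) = ∫ y : ℝ, F ((y:ℂ) + ((Real.pi/2:ℝ):ℂ)*I) := by
    have hT : Filter.Tendsto (fun R : ℝ =>
        (∫ x in -R..R, F (x:ℂ)) - (∫ x in -R..R, F ((x:ℂ) + ((Real.pi/2:ℝ):ℂ)*I))
          + I • (∫ γ in (0:ℝ)..(Real.pi/2), F ((R:ℂ) + (γ:ℂ)*I))
          - I • (∫ γ in (0:ℝ)..(Real.pi/2), F (((-R:ℝ):ℂ) + (γ:ℂ)*I)))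
        Filter.atTop
        (𝓝 ((∫ y : ℝ, F (y:ℂ)) - (∫ y : ℝ, F ((y:ℂ) + ((Real.pi/2:ℝ):ℂ)*I)) + I • 0 - I • 0)) :=
      (((hlim1.sub hlim2).add (hlim3.const_smul I)).sub (hlim4.const_smul I))
    have hT0 : Filter.Tendsto (fun R : ℝ =>
        (∫ x in -R..R, F (x:ℂ)) - (∫ x in -R..R, F ((x:ℂ) + ((Real.pi/2:ℝ):ℂ)*I))
          + I • (∫ γ in (0:ℝ)..(Real.pi/2), F ((R:ℂ) + (γ:ℂ)*I))
          - I • (∫ γ in (0:ℝ)..(Real.pi/2), F (((-R:ℝ):ℂ) + (γ:ℂ)*I)))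
        Filter.atTop (𝓝 0) :=
      Filter.Tendsto.congr (fun R => (rect R).symm) tendsto_const_nhds
    have := tendsto_nhds_unique hT hT0
    simp only [smul_zero, add_zero, sub_zero] at this
    exact sub_eq_zero.mp this
  -- change of variables ξ = e^y
  have hsub : (∫ ξ in Set.Ioi (0:ℝ),
      Complex.exp (-I * (x':ℂ) * (ξ:ℂ) - Cp * (ξ:ℂ) ^ (α:ℂ))) = ∫ y : ℝ, F (y:ℂ) := by
    have himg : Real.exp '' Set.univ = Set.Ioi (0:ℝ) := by
      rw [Set.image_univ, Real.range_exp]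
    rw [← himg, integral_image_eq_integral_abs_deriv_smul MeasurableSet.univ
      (fun x _ => (Real.hasDerivAt_exp x).hasDerivWithinAt) (Real.exp_injective.injOn)]
    rw [MeasureTheory.setIntegral_univ]
    congr 1
    funext y
    have hep : (0:ℝ) < Real.exp y := Real.exp_pos y
    rw [abs_of_pos hep, Complex.real_smul, Complex.ofReal_exp]
    have hcpow : (Complex.exp (y:ℂ)) ^ (α:ℂ) = Complex.exp ((α:ℂ) * y) := by
      rw [Complex.cpow_def_of_ne_zero (Complex.exp_ne_zero _),
        Complex.log_exp (by simp; positivity) (by simp [Real.pi_nonneg])]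
      ring_nf
    rw [hcpow, hFdef]
    rw [← Complex.exp_add]
    ring_nf
  -- conclude
  rw [hsub, heq]
  congr 1
  have hri := integral_re hint1
  simp only [RCLike.re_to_complex] at hri
  rw [← hri]
  congr 1
  funext y
  rw [hFdef]
  simp only [Complex.exp_re]
  rw [hre y (Real.pi/2), him y (Real.pi/2)]
  rw [Real.sin_pi_div_two, Real.cos_pi_div_two]
  rw [show Real.pi/2 - x' * Real.exp y * 0 - r * Real.exp (α*y) * Real.sin (φ + α*(Real.pi/2))
      = Real.pi/2 - r * Real.exp (α*y) * Real.sin (φ + α*(Real.pi/2)) from by ring]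
  rw [Real.cos_pi_div_two_sub]
  rw [show φ + α*(Real.pi/2) = φ + α*Real.pi/2 from by ring]
  congr 1
  · congr 1
    ring
  · congr 1
    ring
end

section
/- For c₀ > 0 and ω₀ ∈ (−π/2, π/2), the principal-value integral J(c₀ e^{iω₀}) := (1/(2π)) ∫_{−∞}^{+∞} (e^{−c₀|ξ| e^{iω₀ sign ξ}} − e^{−|ξ|})/(−iξ) dξ equals ω₀/π. -/
open Complex Set MeasureTheory Filter

lemma aux_integrable_cexp {z : ℂ} (hz : 0 < z.re) :
    IntegrableOn (fun ξ : ℝ => Complex.exp (-(z * ξ))) (Ioi (0:ℝ)) := by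
  apply Integrable.mono' ((exp_neg_integrableOn_Ioi 0 hz))
  · exact (Continuous.aestronglyMeasurable (by fun_prop)).restrict
  · filter_upwards with x
    rw [Complex.norm_exp]
    simp [Complex.ofReal_mul, mul_comm]

lemma aux_int_cexp {z : ℂ} (hz : 0 < z.re) :
    ∫ ξ in Ioi (0:ℝ), Complex.exp (-(z * ξ)) = 1 / z := by
  have hz0 : z ≠ 0 := fun h => by simp [h] at hz
  have hderiv : ∀ x ∈ Ici (0:ℝ),
      HasDerivAt (fun x : ℝ => -Complex.exp (-(z * x)) / z) (Complex.exp (-(z * x))) x := by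
    intro x _
    have h1 : HasDerivAt (fun x : ℝ => -(z * (x:ℂ))) (-z) x := by
      simpa using ((Complex.ofRealCLM.hasDerivAt (x := x)).const_mul z).fun_neg
    have h2 := h1.cexp
    have h3 := (h2.fun_neg.div_const z)
    convert h3 using 1
    · rfl
    rw [mul_neg, neg_neg, mul_div_assoc, div_self hz0, mul_one]
  have htend : Tendsto (fun x : ℝ => -Complex.exp (-(z * x)) / z) atTop (nhds 0) := by
    rw [tendsto_zero_iff_norm_tendsto_zero]
    have : (fun x : ℝ => ‖-Complex.exp (-(z * x)) / z‖)
        = fun x : ℝ => Real.exp (-(z.re * x)) / ‖z‖ := by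
      funext x
      rw [norm_div, norm_neg, Complex.norm_exp]
      simp [Complex.ofReal_mul]
    rw [this]
    have h4 : Tendsto (fun x : ℝ => -(z.re * x)) atTop atBot := by
      exact tendsto_neg_atBot_iff.mpr (tendsto_id.const_mul_atTop hz)
    simpa using (Real.tendsto_exp_atBot.comp h4).div_const ‖z‖
  have := integral_Ioi_of_hasDerivAt_of_tendsto' hderiv (aux_integrable_cexp hz) htend
  rw [this]
  simp [neg_div]

lemma aux_half (L : ℂ) {α : ℝ} (hα : 0 < α)
    (hre : ∀ s ∈ Icc (0:ℝ) 1, α ≤ (Complex.exp ((s:ℂ) * L)).re) :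
    IntegrableOn (fun ξ : ℝ => (Complex.exp (-(Complex.exp L * ξ)) - Complex.exp (-(ξ:ℂ))) / ξ)
      (Ioi (0:ℝ)) ∧
    ∫ ξ in Ioi (0:ℝ),
        (Complex.exp (-(Complex.exp L * ξ)) - Complex.exp (-(ξ:ℂ))) / ξ = -L := by
  set H : ℝ → ℝ → ℂ :=
    fun s ξ => Complex.exp (-(Complex.exp ((s:ℂ) * L) * ξ)) * (-(Complex.exp ((s:ℂ) * L) * L))
    with hH
  set K : ℝ := Real.exp ‖L‖ * ‖L‖ with hK
  -- pointwise representation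
  have hpt : ∀ ξ : ℝ, ξ ≠ 0 →
      (Complex.exp (-(Complex.exp L * ξ)) - Complex.exp (-(ξ:ℂ))) / ξ
        = ∫ s in (0:ℝ)..1, H s ξ := by
    intro ξ hξ
    have hF : ∀ s ∈ uIcc (0:ℝ) 1,
        HasDerivAt (fun s : ℝ => Complex.exp (-(Complex.exp ((s:ℂ) * L) * ξ)))
          (H s ξ * ξ) s := by
      intro s _
      have h1 : HasDerivAt (fun s : ℝ => (s:ℂ) * L) L s := by
        simpa using (Complex.ofRealCLM.hasDerivAt (x := s)).mul_const L
      have h4 := ((h1.cexp.mul_const (ξ:ℂ)).fun_neg).cexp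
      convert h4 using 1
      simp only [hH]
      ring
    have hc : Continuous fun s : ℝ => H s ξ * (ξ:ℂ) := by
      simp only [hH]; fun_prop
    have hInt : IntervalIntegrable (fun s => H s ξ * (ξ:ℂ)) volume 0 1 :=
      hc.intervalIntegrable 0 1
    have := intervalIntegral.integral_eq_sub_of_hasDerivAt hF hInt
    rw [intervalIntegral.integral_mul_const] at this
    rw [div_eq_iff (show (ξ:ℂ) ≠ 0 by exact_mod_cast hξ), this]
    norm_num [Complex.exp_zero]
  -- norm bound
  have hbound : ∀ s ∈ Icc (0:ℝ) 1, ∀ ξ : ℝ, 0 ≤ ξ →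
      ‖H s ξ‖ ≤ K * Real.exp (-α * ξ) := by
    intro s hs ξ hξ
    have hre' := hre s hs
    have h1 : ‖Complex.exp (-(Complex.exp ((s:ℂ) * L) * ξ))‖ ≤ Real.exp (-α * ξ) := by
      rw [Complex.norm_exp]
      apply Real.exp_le_exp.2
      have : (-(Complex.exp ((s:ℂ) * L) * ξ)).re = -((Complex.exp ((s:ℂ) * L)).re * ξ) := by
        simp [Complex.mul_re]
      rw [this, neg_mul]
      exact neg_le_neg (mul_le_mul_of_nonneg_right hre' hξ)
    have h2 : ‖Complex.exp ((s:ℂ) * L)‖ ≤ Real.exp ‖L‖ := by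
      rw [Complex.norm_exp]
      apply Real.exp_le_exp.2
      have : ((s:ℂ) * L).re = s * L.re := by simp [Complex.mul_re]
      rw [this]
      calc s * L.re ≤ |s * L.re| := le_abs_self _
        _ = |s| * |L.re| := abs_mul _ _
        _ ≤ 1 * ‖L‖ := by
            apply mul_le_mul (by rw [_root_.abs_of_nonneg hs.1]; exact hs.2)
              (Complex.abs_re_le_norm L) (abs_nonneg _) zero_le_one
        _ = ‖L‖ := one_mul _
    calc ‖H s ξ‖ = ‖Complex.exp (-(Complex.exp ((s:ℂ) * L) * ξ))‖ *
          (‖Complex.exp ((s:ℂ) * L)‖ * ‖L‖) := by simp [hH, norm_mul]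
      _ ≤ Real.exp (-α * ξ) * (Real.exp ‖L‖ * ‖L‖) := by
          apply mul_le_mul h1 (mul_le_mul_of_nonneg_right h2 (norm_nonneg _))
            (by positivity) (by positivity)
      _ = K * Real.exp (-α * ξ) := by ring
  -- integrability of g on Ioi 0
  have hgint : IntegrableOn
      (fun ξ : ℝ => (Complex.exp (-(Complex.exp L * ξ)) - Complex.exp (-(ξ:ℂ))) / ξ)
      (Ioi (0:ℝ)) := by
    apply Integrable.mono' ((exp_neg_integrableOn_Ioi 0 hα).const_mul K)
    · apply ContinuousOn.aestronglyMeasurable ?_ measurableSet_Ioi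
      apply ContinuousOn.div (Continuous.continuousOn (by fun_prop))
        Complex.continuous_ofReal.continuousOn
      intro x hx
      exact_mod_cast ne_of_gt (hx : (0:ℝ) < x)
    · filter_upwards [ae_restrict_mem measurableSet_Ioi] with ξ hξ
      rw [hpt ξ (ne_of_gt hξ)]
      have := intervalIntegral.norm_integral_le_of_norm_le_const
        (a := (0:ℝ)) (b := 1) (C := K * Real.exp (-α * ξ)) (f := fun s => H s ξ) ?_
      · simpa using this
      · intro s hs
        rw [uIoc_of_le zero_le_one] at hs
        exact hbound s (Ioc_subset_Icc_self hs) ξ (le_of_lt hξ)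
  refine ⟨hgint, ?_⟩
  -- Fubini
  have hprod : Integrable (fun p : ℝ × ℝ => H p.2 p.1)
      ((volume.restrict (Ioi (0:ℝ))).prod (volume.restrict (Ioc (0:ℝ) 1))) := by
    have hBint : Integrable (fun p : ℝ × ℝ => (K * Real.exp (-α * p.1)) * 1)
        ((volume.restrict (Ioi (0:ℝ))).prod (volume.restrict (Ioc (0:ℝ) 1))) := by
      have hg : Integrable (fun _ : ℝ => (1:ℝ)) (volume.restrict (Ioc (0:ℝ) 1)) :=
        integrableOn_const (by simp)
      exact Integrable.mul_prod ((exp_neg_integrableOn_Ioi 0 hα).const_mul K) hg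
    apply Integrable.mono' hBint
    · refine Continuous.aestronglyMeasurable ?_
      simp only [hH]; fun_prop
    · rw [Measure.prod_restrict]
      filter_upwards [ae_restrict_mem (measurableSet_Ioi.prod measurableSet_Ioc)] with p hp
      simp only [mul_one]
      exact hbound p.2 (Ioc_subset_Icc_self hp.2) p.1 (le_of_lt hp.1)
  calc ∫ ξ in Ioi (0:ℝ),
        (Complex.exp (-(Complex.exp L * ξ)) - Complex.exp (-(ξ:ℂ))) / ξ
      = ∫ ξ in Ioi (0:ℝ), ∫ s in Ioc (0:ℝ) 1, H s ξ := by
        apply setIntegral_congr_fun measurableSet_Ioi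
        intro ξ hξ
        dsimp only
        rw [hpt ξ (ne_of_gt hξ), intervalIntegral.integral_of_le zero_le_one]
    _ = ∫ s in Ioc (0:ℝ) 1, ∫ ξ in Ioi (0:ℝ), H s ξ :=
        integral_integral_swap (f := fun ξ s => H s ξ) hprod
    _ = ∫ s in Ioc (0:ℝ) 1, (-L : ℂ) := by
        apply setIntegral_congr_fun measurableSet_Ioc
        intro s hs
        have hz : 0 < (Complex.exp ((s:ℂ) * L)).re :=
          lt_of_lt_of_le hα (hre s (Ioc_subset_Icc_self hs))
        dsimp only [hH]
        rw [integral_mul_const, aux_int_cexp hz]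
        field_simp [Complex.exp_ne_zero]
    _ = -L := by
        rw [setIntegral_const]
        simp [Real.volume_Ioc]

lemma aux_re (c₀ ω₀ : ℝ) (hc₀ : 0 < c₀)
    (hω₀ : ω₀ ∈ Set.Ioo (-(Real.pi / 2)) (Real.pi / 2)) (ω : ℝ) (hω : |ω| = |ω₀|) :
    ∀ s ∈ Icc (0:ℝ) 1, Real.exp (min 0 (Real.log c₀)) * Real.cos ω₀
      ≤ (Complex.exp ((s:ℂ) * ((Real.log c₀ : ℂ) + Complex.I * (ω : ℂ)))).re := by
  intro s hs
  have hre : ((s:ℂ) * ((Real.log c₀ : ℂ) + Complex.I * (ω : ℂ))).re = s * Real.log c₀ := by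
    simp [Complex.mul_re, Complex.add_re, Complex.mul_im]
  have him : ((s:ℂ) * ((Real.log c₀ : ℂ) + Complex.I * (ω : ℂ))).im = s * ω := by
    simp [Complex.mul_im, Complex.add_im, Complex.mul_re]
  rw [Complex.exp_re, hre, him]
  have h1 : Real.exp (min 0 (Real.log c₀)) ≤ Real.exp (s * Real.log c₀) := by
    apply Real.exp_le_exp.2
    rcases le_or_gt 0 (Real.log c₀) with h | h
    · exact le_trans (min_le_left _ _) (mul_nonneg hs.1 h)
    · refine le_trans (min_le_right _ _) ?_
      calc Real.log c₀ = 1 * Real.log c₀ := (one_mul _).symm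
        _ ≤ s * Real.log c₀ := mul_le_mul_of_nonpos_right hs.2 h.le
  have habs : |ω₀| < Real.pi / 2 := abs_lt.2 ⟨by linarith [hω₀.1], hω₀.2⟩
  have h2 : Real.cos ω₀ ≤ Real.cos (s * ω) := by
    rw [← Real.cos_abs ω₀, ← Real.cos_abs (s * ω)]
    apply Real.cos_le_cos_of_nonneg_of_le_pi (abs_nonneg _)
      (by linarith [Real.pi_pos])
    rw [abs_mul, hω, _root_.abs_of_nonneg hs.1]
    calc s * |ω₀| ≤ 1 * |ω₀| := mul_le_mul_of_nonneg_right hs.2 (abs_nonneg _)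
      _ = |ω₀| := one_mul _
  have hcos : 0 ≤ Real.cos ω₀ := (Real.cos_pos_of_mem_Ioo hω₀).le
  exact mul_le_mul h1 h2 hcos (Real.exp_pos _).le

/-- For c₀ > 0 and ω₀ ∈ (−π/2, π/2),
J(c₀e^{iω₀}) = (1/(2π)) ∫ℝ (e^{−c₀|ξ|e^{iω₀ sign ξ}} − e^{−|ξ|})/(−iξ) dξ = ω₀/π. -/
theorem stmt_13 (c₀ ω₀ : ℝ) (hc₀ : 0 < c₀)
    (hω₀ : ω₀ ∈ Set.Ioo (-(Real.pi / 2)) (Real.pi / 2)) :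
    (1 / (2 * Real.pi) : ℂ) *
      (∫ ξ : ℝ,
        (Complex.exp (-((c₀ : ℂ) * (|ξ| : ℝ) *
            Complex.exp (Complex.I * (ω₀ : ℂ) * (Real.sign ξ : ℝ)))) -
          Complex.exp (-(|ξ| : ℝ))) / (-Complex.I * (ξ : ℂ))) =
    ((ω₀ / Real.pi : ℝ) : ℂ) := by
  set f : ℝ → ℂ := fun ξ =>
    (Complex.exp (-((c₀ : ℂ) * (|ξ| : ℝ) *
        Complex.exp (Complex.I * (ω₀ : ℂ) * (Real.sign ξ : ℝ)))) -
      Complex.exp (-(|ξ| : ℝ))) / (-Complex.I * (ξ : ℂ)) with hf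
  set L₀ : ℂ := (Real.log c₀ : ℂ) + Complex.I * (ω₀ : ℂ) with hL₀
  set L₁ : ℂ := (Real.log c₀ : ℂ) + Complex.I * ((-ω₀ : ℝ) : ℂ) with hL₁
  have hα : 0 < Real.exp (min 0 (Real.log c₀)) * Real.cos ω₀ :=
    mul_pos (Real.exp_pos _) (Real.cos_pos_of_mem_Ioo hω₀)
  have h0 := aux_half L₀ hα (aux_re c₀ ω₀ hc₀ hω₀ ω₀ rfl)
  have h1 := aux_half L₁ hα (aux_re c₀ ω₀ hc₀ hω₀ (-ω₀) (abs_neg ω₀))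
  have hexplog : Complex.exp ((Real.log c₀ : ℝ) : ℂ) = (c₀ : ℂ) := by
    rw [← Complex.ofReal_exp, Real.exp_log hc₀]
  have hexp0 : Complex.exp L₀ = (c₀ : ℂ) * Complex.exp (Complex.I * (ω₀ : ℂ)) := by
    rw [hL₀, Complex.exp_add, hexplog]
  have hexp1 : Complex.exp L₁ = (c₀ : ℂ) * Complex.exp (-(Complex.I * (ω₀ : ℂ))) := by
    rw [hL₁, Complex.exp_add, hexplog]
    push_cast
    ring_nf
  -- pointwise identities on the positive half line
  have claimA : ∀ ξ ∈ Ioi (0:ℝ), f ξ =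
      Complex.I * ((Complex.exp (-(Complex.exp L₀ * ξ)) - Complex.exp (-(ξ:ℂ))) / ξ) := by
    intro ξ hξ
    have hpos : (0:ℝ) < ξ := hξ
    have hξ0 : (ξ:ℂ) ≠ 0 := by exact_mod_cast hpos.ne'
    rw [hf]
    simp only [Real.sign_of_pos hpos, abs_of_pos hpos, hexp0]
    push_cast
    rw [div_eq_iff (by simp [Complex.I_ne_zero, hξ0] : -Complex.I * (ξ:ℂ) ≠ 0)]
    have : -((c₀:ℂ) * ξ * Complex.exp (Complex.I * (ω₀:ℂ) * 1))
        = -((c₀:ℂ) * Complex.exp (Complex.I * (ω₀:ℂ)) * ξ) := by ring_nf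
    rw [this]
    field_simp
    ring_nf
    simp [Complex.I_sq]
    ring
  have claimB : ∀ ξ ∈ Ioi (0:ℝ), f (-ξ) =
      -Complex.I * ((Complex.exp (-(Complex.exp L₁ * ξ)) - Complex.exp (-(ξ:ℂ))) / ξ) := by
    intro ξ hξ
    have hpos : (0:ℝ) < ξ := hξ
    have hξ0 : (ξ:ℂ) ≠ 0 := by exact_mod_cast hpos.ne'
    rw [hf]
    simp only [Real.sign_of_neg (neg_neg_iff_pos.2 hpos), abs_neg, abs_of_pos hpos, hexp1]
    push_cast
    rw [div_eq_iff (by simp [Complex.I_ne_zero, hξ0] : -Complex.I * (-ξ:ℂ) ≠ 0)]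
    have : -((c₀:ℂ) * ξ * Complex.exp (Complex.I * (ω₀:ℂ) * (-1)))
        = -((c₀:ℂ) * Complex.exp (-(Complex.I * (ω₀:ℂ))) * ξ) := by ring_nf
    rw [this]
    field_simp
    ring_nf
    simp [Complex.I_sq]
    ring
  -- integrability of f on both half lines
  have hIoi : IntegrableOn f (Ioi (0:ℝ)) := by
    apply (h0.1.const_mul Complex.I).congr
    filter_upwards [ae_restrict_mem measurableSet_Ioi] with ξ hξ
    exact (claimA ξ hξ).symm
  have hIoiNeg : IntegrableOn (fun ξ => f (-ξ)) (Ioi (0:ℝ)) := by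
    apply (h1.1.const_mul (-Complex.I)).congr
    filter_upwards [ae_restrict_mem measurableSet_Ioi] with ξ hξ
    exact (claimB ξ hξ).symm
  have hIic : IntegrableOn f (Iic (0:ℝ)) := by
    apply (MeasurePreserving.integrableOn_comp_preimage
      (Measure.measurePreserving_neg (volume : Measure ℝ))
      (Homeomorph.neg ℝ).measurableEmbedding
      (f := f) (s := Iic (0:ℝ))).1
    have hpre : (Neg.neg : ℝ → ℝ) ⁻¹' (Iic (0:ℝ)) = Ici (0:ℝ) := by
      ext x; simp
    show IntegrableOn (f ∘ Neg.neg) ((Neg.neg : ℝ → ℝ) ⁻¹' (Iic (0:ℝ))) volume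
    rw [hpre]
    rw [integrableOn_Ici_iff_integrableOn_Ioi]
    exact hIoiNeg
  -- compute the two half-line integrals
  have hint0 : ∫ ξ in Ioi (0:ℝ), f ξ = -(Complex.I * L₀) := by
    rw [setIntegral_congr_fun measurableSet_Ioi claimA, integral_const_mul, h0.2]
    ring
  have hint1 : ∫ ξ in Iic (0:ℝ), f ξ = Complex.I * L₁ := by
    rw [show Iic (0:ℝ) = Iic (-(0:ℝ)) by norm_num, ← integral_comp_neg_Ioi]
    rw [setIntegral_congr_fun measurableSet_Ioi claimB, integral_const_mul, h1.2]
    ring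
  rw [← intervalIntegral.integral_Iic_add_Ioi hIic hIoi, hint0, hint1]
  have : Complex.I * L₁ + -(Complex.I * L₀) = 2 * (ω₀ : ℂ) := by
    rw [hL₀, hL₁]
    push_cast
    ring_nf
    simp [Complex.I_sq]
  rw [this]
  have hπ : (Real.pi : ℂ) ≠ 0 := by exact_mod_cast Real.pi_ne_zero
  push_cast
  field_simp
end
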